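/- arXiv:2312.12407 — 2 statements merged into one kernel-verified Lean document; each statement's English description precedes it below -/
import Mathlib

section
/- Comparison of linearized Monge–Ampère operators (Lemma 3.x, 'comparing Ψ̂' and Ψ''): for q, q̂ ∈ C^{2+β}_+(𝕋^d) with C^{2+β} norms at most λ, there exists a constant C > 0 depending only on d, β, λ such that for every u ∈ C^{2+β}_0(𝕋^d), ‖ det(∇²φ₀)·[ (q̂−q)(∇φ₀)·⟨(∇²φ₀)^{-1}, ∇²u⟩_F + ⟨∇u, (∇q̂−∇q)(∇φ₀)⟩ ] ‖_{C^{β}} ≤ C · ( ‖u‖_{C^{2+β}} · ‖q̂−q‖_{C^{β}} + ‖u‖_{C^{1+β}} · ‖q̂−q‖_{C^{1+β}} ). -/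
open MeasureTheory Real
open scoped ENNReal NNReal RealInnerProductSpace

noncomputable section

abbrev Ed (d : ℕ) : Type := EuclideanSpace ℝ (Fin d)

def intVec {d : ℕ} (k : Fin d → ℤ) : Ed d := WithLp.toLp 2 (fun i => (k i : ℝ))

def ZdPeriodic {d : ℕ} (f : Ed d → ℝ) : Prop :=
  ∀ (x : Ed d) (k : Fin d → ℤ), f (x + intVec k) = f x

def supDeriv {d : ℕ} (j : ℕ) (f : Ed d → ℝ) : ℝ≥0∞ :=
  ⨆ x : Ed d, (‖iteratedFDeriv ℝ j f x‖₊ : ℝ≥0∞)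

def holderSemi {d : ℕ} (k : ℕ) (ε : ℝ) (f : Ed d → ℝ) : ℝ≥0∞ :=
  ⨆ (x : Ed d) (y : Ed d) (_ : x ≠ y),
    (‖iteratedFDeriv ℝ k f x - iteratedFDeriv ℝ k f y‖₊ : ℝ≥0∞) / (‖x - y‖₊ : ℝ≥0∞) ^ ε

def holderNorm {d : ℕ} (α : ℝ) (f : Ed d → ℝ) : ℝ≥0∞ :=
  (∑ j ∈ Finset.range (⌊α⌋₊ + 1), supDeriv j f) +
  (if α = (⌊α⌋₊ : ℝ) then 0 else holderSemi ⌊α⌋₊ (α - ⌊α⌋₊) f)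

def hess {d : ℕ} (f : Ed d → ℝ) (x : Ed d) : Matrix (Fin d) (Fin d) ℝ :=
  fun i j => iteratedFDeriv ℝ 2 f x ![EuclideanSpace.single i 1, EuclideanSpace.single j 1]

def pdiv {d : ℕ} (F : Ed d → Fin d → ℝ) (x : Ed d) : ℝ :=
  ∑ i, fderiv ℝ (fun y => F y i) x (EuclideanSpace.single i 1)

/-- Frobenius inner product `⟨M,N⟩_F = tr(Mᵀ N)`. -/
def frobInner {d : ℕ} (M N : Matrix (Fin d) (Fin d) ℝ) : ℝ := (M.transpose * N).trace

def unitCube (d : ℕ) : Set (Ed d) := {x | ∀ i, x i ∈ Set.Icc (0 : ℝ) 1}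

def hessLB {d : ℕ} (f : Ed d → ℝ) (c : ℝ) : Prop :=
  ∀ (x v : Ed d), c * ‖v‖ ^ 2 ≤ ∑ i, ∑ j, v i * hess f x i j * v j

namespace MAH

variable {d : ℕ} {β : ℝ}

lemma ofReal_norm_eq_coe_nnnorm {E : Type*} [SeminormedAddCommGroup E] (a : E) :
    ENNReal.ofReal ‖a‖ = (‖a‖₊ : ℝ≥0∞) := ENNReal.ofReal_eq_coe_nnreal (norm_nonneg a)

lemma edist_eq_coe_nnnorm_sub {E : Type*} [SeminormedAddCommGroup E] (a b : E) :
    edist a b = (‖a - b‖₊ : ℝ≥0∞) := edist_eq_enorm_sub a b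

def eS (f : Ed d → ℝ) : ℝ≥0∞ := ⨆ x : Ed d, (‖f x‖₊ : ℝ≥0∞)

def eT (β : ℝ) (f : Ed d → ℝ) : ℝ≥0∞ :=
  ⨆ (x : Ed d) (y : Ed d) (_ : x ≠ y),
    (‖f x - f y‖₊ : ℝ≥0∞) / (‖x - y‖₊ : ℝ≥0∞) ^ β

def eN (β : ℝ) (f : Ed d → ℝ) : ℝ≥0∞ := eS f + eT β f

lemma rpow_ne_zero {x y : Ed d} (h : x ≠ y) : ((‖x - y‖₊ : ℝ≥0∞) : ℝ≥0∞) ^ β ≠ 0 := by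
  have h0 : ‖x - y‖₊ ≠ 0 := by
    simpa [nnnorm_eq_zero, sub_eq_zero] using h
  rw [← ENNReal.coe_rpow_of_ne_zero h0]
  simp [NNReal.rpow_eq_zero_iff, h0]

lemma rpow_ne_top {x y : Ed d} (h : x ≠ y) : ((‖x - y‖₊ : ℝ≥0∞) : ℝ≥0∞) ^ β ≠ ⊤ := by
  have h0 : ‖x - y‖₊ ≠ 0 := by
    simpa [nnnorm_eq_zero, sub_eq_zero] using h
  rw [← ENNReal.coe_rpow_of_ne_zero h0]
  exact ENNReal.coe_ne_top

lemma le_eS (f : Ed d → ℝ) (x : Ed d) : (‖f x‖₊ : ℝ≥0∞) ≤ eS f := le_iSup (fun x : Ed d => (‖f x‖₊ : ℝ≥0∞)) x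

lemma eS_le {f : Ed d → ℝ} {M : ℝ≥0∞} (h : ∀ x, (‖f x‖₊ : ℝ≥0∞) ≤ M) : eS f ≤ M := by
  rw [eS]; exact iSup_le h

lemma eT_le {f : Ed d → ℝ} {M : ℝ≥0∞}
    (h : ∀ x y, x ≠ y → (‖f x - f y‖₊ : ℝ≥0∞) ≤ M * (‖x - y‖₊ : ℝ≥0∞) ^ β) :
    eT β f ≤ M := by
  rw [eT]
  refine iSup_le fun x => iSup_le fun y => iSup_le fun hxy => ?_
  exact (ENNReal.div_le_iff (rpow_ne_zero hxy) (rpow_ne_top hxy)).2 (h x y hxy)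

lemma nnnorm_sub_le_eT (f : Ed d → ℝ) (x y : Ed d) :
    (‖f x - f y‖₊ : ℝ≥0∞) ≤ eT β f * (‖x - y‖₊ : ℝ≥0∞) ^ β := by
  rcases eq_or_ne x y with rfl | hxy
  · simp
  · have h1 : (‖f x - f y‖₊ : ℝ≥0∞) / (‖x - y‖₊ : ℝ≥0∞) ^ β ≤ eT β f := by
      refine le_trans ?_ (le_iSup _ x)
      refine le_trans ?_ (le_iSup _ y)
      exact le_iSup (fun _ : x ≠ y => (‖f x - f y‖₊ : ℝ≥0∞) / (‖x - y‖₊ : ℝ≥0∞) ^ β) hxy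
    calc (‖f x - f y‖₊ : ℝ≥0∞)
        = (‖f x - f y‖₊ : ℝ≥0∞) / (‖x - y‖₊ : ℝ≥0∞) ^ β * (‖x - y‖₊ : ℝ≥0∞) ^ β := by
          rw [ENNReal.div_mul_cancel (rpow_ne_zero hxy) (rpow_ne_top hxy)]
      _ ≤ eT β f * (‖x - y‖₊ : ℝ≥0∞) ^ β := by
          exact mul_le_mul_left h1 _

lemma nnnorm_sub_le_holderSemi (k : ℕ) (f : Ed d → ℝ) (x y : Ed d) :
    (‖iteratedFDeriv ℝ k f x - iteratedFDeriv ℝ k f y‖₊ : ℝ≥0∞) ≤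
      holderSemi k β f * (‖x - y‖₊ : ℝ≥0∞) ^ β := by
  rcases eq_or_ne x y with rfl | hxy
  · simp
  · have h1 : (‖iteratedFDeriv ℝ k f x - iteratedFDeriv ℝ k f y‖₊ : ℝ≥0∞) / (‖x - y‖₊ : ℝ≥0∞) ^ β ≤ holderSemi k β f := by
      refine le_trans ?_ (le_iSup _ x)
      refine le_trans ?_ (le_iSup _ y)
      exact le_iSup (fun _ : x ≠ y => (‖iteratedFDeriv ℝ k f x - iteratedFDeriv ℝ k f y‖₊ : ℝ≥0∞) / (‖x - y‖₊ : ℝ≥0∞) ^ β) hxy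
    calc (‖iteratedFDeriv ℝ k f x - iteratedFDeriv ℝ k f y‖₊ : ℝ≥0∞)
        = (‖iteratedFDeriv ℝ k f x - iteratedFDeriv ℝ k f y‖₊ : ℝ≥0∞) / (‖x - y‖₊ : ℝ≥0∞) ^ β * (‖x - y‖₊ : ℝ≥0∞) ^ β := by
          rw [ENNReal.div_mul_cancel (rpow_ne_zero hxy) (rpow_ne_top hxy)]
      _ ≤ holderSemi k β f * (‖x - y‖₊ : ℝ≥0∞) ^ β := mul_le_mul_left h1 _

lemma eN_le_of {f : Ed d → ℝ} {S T : ℝ≥0∞}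
    (h1 : ∀ x, (‖f x‖₊ : ℝ≥0∞) ≤ S)
    (h2 : ∀ x y, x ≠ y → (‖f x - f y‖₊ : ℝ≥0∞) ≤ T * (‖x - y‖₊ : ℝ≥0∞) ^ β) :
    eN β f ≤ S + T :=
  add_le_add (eS_le h1) (eT_le h2)


lemma eN_mul (f g : Ed d → ℝ) :
    eN β (fun x => f x * g x) ≤ eN β f * eN β g := by
  have hS : eS (fun x => f x * g x) ≤ eS f * eS g := by
    refine eS_le fun x => ?_
    calc (‖f x * g x‖₊ : ℝ≥0∞) = (‖f x‖₊ : ℝ≥0∞) * (‖g x‖₊ : ℝ≥0∞) := by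
          rw [← ENNReal.coe_mul, nnnorm_mul]
      _ ≤ eS f * eS g := mul_le_mul' (le_eS f x) (le_eS g x)
  have hT : eT β (fun x => f x * g x) ≤ eS f * eT β g + eT β f * eS g := by
    refine eT_le fun x y hxy => ?_
    have key : f x * g x - f y * g y = f x * (g x - g y) + (f x - f y) * g y := by ring
    calc (‖f x * g x - f y * g y‖₊ : ℝ≥0∞)
        ≤ (‖f x * (g x - g y)‖₊ : ℝ≥0∞) + (‖(f x - f y) * g y‖₊ : ℝ≥0∞) := by
          rw [key, ← ENNReal.coe_add]
          exact_mod_cast nnnorm_add_le _ _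
      _ = (‖f x‖₊ : ℝ≥0∞) * (‖g x - g y‖₊ : ℝ≥0∞) + (‖f x - f y‖₊ : ℝ≥0∞) * (‖g y‖₊ : ℝ≥0∞) := by
          rw [← ENNReal.coe_mul, ← ENNReal.coe_mul, nnnorm_mul, nnnorm_mul]
      _ ≤ eS f * (eT β g * (‖x - y‖₊ : ℝ≥0∞) ^ β) + eT β f * (‖x - y‖₊ : ℝ≥0∞) ^ β * eS g := by
          exact add_le_add (mul_le_mul' (le_eS f x) (nnnorm_sub_le_eT g x y))
            (mul_le_mul' (nnnorm_sub_le_eT f x y) (le_eS g y))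
      _ = (eS f * eT β g + eT β f * eS g) * (‖x - y‖₊ : ℝ≥0∞) ^ β := by ring
  have expand : eN β f * eN β g
      = (eS f * eS g + (eS f * eT β g + eT β f * eS g)) + eT β f * eT β g := by
    rw [eN, eN]; ring
  calc eN β (fun x => f x * g x) ≤ eS f * eS g + (eS f * eT β g + eT β f * eS g) :=
        add_le_add hS hT
    _ ≤ eN β f * eN β g := by rw [expand]; exact le_add_right le_rfl

lemma eN_add (f g : Ed d → ℝ) :
    eN β (fun x => f x + g x) ≤ eN β f + eN β g := by
  have hS : eS (fun x => f x + g x) ≤ eS f + eS g := by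
    refine eS_le fun x => ?_
    calc (‖f x + g x‖₊ : ℝ≥0∞) ≤ (‖f x‖₊ : ℝ≥0∞) + (‖g x‖₊ : ℝ≥0∞) := by
          rw [← ENNReal.coe_add]; exact_mod_cast nnnorm_add_le _ _
      _ ≤ eS f + eS g := add_le_add (le_eS f x) (le_eS g x)
  have hT : eT β (fun x => f x + g x) ≤ eT β f + eT β g := by
    refine eT_le fun x y hxy => ?_
    have key : f x + g x - (f y + g y) = (f x - f y) + (g x - g y) := by ring
    calc (‖f x + g x - (f y + g y)‖₊ : ℝ≥0∞)
        ≤ (‖f x - f y‖₊ : ℝ≥0∞) + (‖g x - g y‖₊ : ℝ≥0∞) := by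
          rw [key, ← ENNReal.coe_add]; exact_mod_cast nnnorm_add_le _ _
      _ ≤ eT β f * (‖x - y‖₊ : ℝ≥0∞) ^ β + eT β g * (‖x - y‖₊ : ℝ≥0∞) ^ β :=
          add_le_add (nnnorm_sub_le_eT f x y) (nnnorm_sub_le_eT g x y)
      _ = (eT β f + eT β g) * (‖x - y‖₊ : ℝ≥0∞) ^ β := by ring
  calc eN β (fun x => f x + g x) ≤ (eS f + eS g) + (eT β f + eT β g) := add_le_add hS hT
    _ = eN β f + eN β g := by rw [eN, eN]; ring

lemma eN_const_le (c : ℝ) : eN β (fun _ : Ed d => c) ≤ (‖c‖₊ : ℝ≥0∞) := by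
  have hS : eS (fun _ : Ed d => c) ≤ (‖c‖₊ : ℝ≥0∞) := eS_le fun x => le_rfl
  have hT : eT β (fun _ : Ed d => c) ≤ 0 := by
    refine eT_le fun x y hxy => ?_
    simp
  calc eN β (fun _ : Ed d => c) ≤ (‖c‖₊ : ℝ≥0∞) + 0 := add_le_add hS hT
    _ = (‖c‖₊ : ℝ≥0∞) := by simp

lemma eN_sum {ι : Type*} (s : Finset ι) (F : ι → Ed d → ℝ) :
    eN β (fun x => ∑ i ∈ s, F i x) ≤ ∑ i ∈ s, eN β (F i) := by
  classical
  induction s using Finset.cons_induction with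
  | empty => simpa using eN_const_le (0 : ℝ)
  | cons a s ha ih =>
      simp only [Finset.sum_cons]
      exact le_trans (eN_add (F a) (fun x => ∑ i ∈ s, F i x)) (add_le_add le_rfl ih)

lemma eN_prod {ι : Type*} (s : Finset ι) (F : ι → Ed d → ℝ) :
    eN β (fun x => ∏ i ∈ s, F i x) ≤ ∏ i ∈ s, eN β (F i) := by
  classical
  induction s using Finset.cons_induction with
  | empty => simpa using eN_const_le (1 : ℝ)
  | cons a s ha ih =>
      simp only [Finset.prod_cons]
      exact le_trans (eN_mul (F a) (fun x => ∏ i ∈ s, F i x)) (mul_le_mul' le_rfl ih)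


lemma coe_nnnorm_real (t : ℝ) : ((‖t‖₊ : ℝ≥0∞)) = ENNReal.ofReal |t| := by
  rw [← Real.norm_eq_abs, ofReal_norm_eq_coe_nnnorm]

lemma rpow_coe_eq_ofReal {x y : Ed d} (h : x ≠ y) (hβ : 0 < β) :
    ((‖x - y‖₊ : ℝ≥0∞)) ^ β = ENNReal.ofReal (‖x - y‖ ^ β) := by
  have hpos : (0:ℝ) < ‖x - y‖ := by
    rw [norm_pos_iff, sub_ne_zero]; exact h
  rw [← ofReal_norm_eq_coe_nnnorm, ENNReal.ofReal_rpow_of_pos hpos]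

/-- A bounded Lipschitz function has `eN β` at most `3a`. -/
lemma eN_le_of_bounded_lipschitz {f : Ed d → ℝ} {a : ℝ}
    (hβ0 : 0 < β) (hβ1 : β ≤ 1) (ha : 0 ≤ a)
    (hb : ∀ x, |f x| ≤ a) (hl : ∀ x y, |f x - f y| ≤ a * ‖x - y‖) :
    eN β f ≤ ENNReal.ofReal (3 * a) := by
  have key : ∀ x y : Ed d, x ≠ y → |f x - f y| ≤ (2 * a) * ‖x - y‖ ^ β := by
    intro x y hxy
    have hpos : (0:ℝ) < ‖x - y‖ := by rw [norm_pos_iff, sub_ne_zero]; exact hxy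
    rcases le_or_gt 1 (‖x - y‖) with h1 | h1
    · have h2 : (1:ℝ) ≤ ‖x - y‖ ^ β := Real.one_le_rpow h1 hβ0.le
      calc |f x - f y| ≤ |f x| + |f y| := abs_sub _ _
        _ ≤ a + a := add_le_add (hb x) (hb y)
        _ = (2 * a) * 1 := by ring
        _ ≤ (2 * a) * ‖x - y‖ ^ β := by
            exact mul_le_mul_of_nonneg_left h2 (by linarith)
    · have h2 : ‖x - y‖ ≤ ‖x - y‖ ^ β := by
        calc ‖x - y‖ = ‖x - y‖ ^ (1:ℝ) := (Real.rpow_one _).symm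
          _ ≤ ‖x - y‖ ^ β := Real.rpow_le_rpow_of_exponent_ge hpos h1.le hβ1
      calc |f x - f y| ≤ a * ‖x - y‖ := hl x y
        _ ≤ a * ‖x - y‖ ^ β := mul_le_mul_of_nonneg_left h2 ha
        _ ≤ (2 * a) * ‖x - y‖ ^ β := by
            have : (0:ℝ) ≤ ‖x - y‖ ^ β := Real.rpow_nonneg (norm_nonneg _) β
            nlinarith
  have h1 : ∀ x, (‖f x‖₊ : ℝ≥0∞) ≤ ENNReal.ofReal a := fun x => by
    rw [coe_nnnorm_real]; exact ENNReal.ofReal_le_ofReal (hb x)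
  have h2 : ∀ x y, x ≠ y → (‖f x - f y‖₊ : ℝ≥0∞) ≤
      ENNReal.ofReal (2 * a) * (‖x - y‖₊ : ℝ≥0∞) ^ β := by
    intro x y hxy
    rw [coe_nnnorm_real, rpow_coe_eq_ofReal hxy hβ0,
      ← ENNReal.ofReal_mul (by linarith : (0:ℝ) ≤ 2 * a)]
    exact ENNReal.ofReal_le_ofReal (key x y hxy)
  calc eN β f ≤ ENNReal.ofReal a + ENNReal.ofReal (2 * a) := eN_le_of h1 h2
    _ = ENNReal.ofReal (3 * a) := by
        rw [← ENNReal.ofReal_add ha (by linarith)]; ring_nf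

/-- Composition with a Lipschitz map. -/
lemma eN_comp_lipschitz {f : Ed d → ℝ} {Φ : Ed d → Ed d} {K : ℝ≥0}
    (hβ0 : 0 < β) (hβ1 : β ≤ 1) (hK : 1 ≤ (K : ℝ≥0∞)) (hΦ : LipschitzWith K Φ) :
    eN β (fun x => f (Φ x)) ≤ (K : ℝ≥0∞) * eN β f := by
  have hS : eS (fun x => f (Φ x)) ≤ eS f := eS_le fun x => le_eS f (Φ x)
  have hT : eT β (fun x => f (Φ x)) ≤ (K : ℝ≥0∞) ^ β * eT β f := by
    refine eT_le fun x y hxy => ?_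
    have hlip : (‖Φ x - Φ y‖₊ : ℝ≥0∞) ≤ (K : ℝ≥0∞) * (‖x - y‖₊ : ℝ≥0∞) := by
      have := hΦ.edist_le_mul x y
      simpa [edist_eq_coe_nnnorm_sub] using this
    calc (‖f (Φ x) - f (Φ y)‖₊ : ℝ≥0∞)
        ≤ eT β f * (‖Φ x - Φ y‖₊ : ℝ≥0∞) ^ β := nnnorm_sub_le_eT f _ _
      _ ≤ eT β f * ((K : ℝ≥0∞) * (‖x - y‖₊ : ℝ≥0∞)) ^ β := by
          exact mul_le_mul' le_rfl (ENNReal.rpow_le_rpow hlip hβ0.le)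
      _ = (K : ℝ≥0∞) ^ β * eT β f * (‖x - y‖₊ : ℝ≥0∞) ^ β := by
          rw [ENNReal.mul_rpow_of_nonneg _ _ hβ0.le]; ring
  have hKβ : (K : ℝ≥0∞) ^ β ≤ (K : ℝ≥0∞) := by
    calc (K : ℝ≥0∞) ^ β ≤ (K : ℝ≥0∞) ^ (1:ℝ) :=
          ENNReal.rpow_le_rpow_of_exponent_le hK hβ1
      _ = (K : ℝ≥0∞) := ENNReal.rpow_one _
  calc eN β (fun x => f (Φ x)) ≤ eS f + (K : ℝ≥0∞) ^ β * eT β f := add_le_add hS hT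
    _ ≤ (K : ℝ≥0∞) * eS f + (K : ℝ≥0∞) * eT β f :=
        add_le_add (le_mul_of_one_le_left zero_le hK) (mul_le_mul' hKβ le_rfl)
    _ = (K : ℝ≥0∞) * eN β f := by rw [eN]; ring

/-- Reciprocal of a function bounded below. -/
lemma eN_inv_of_bounded_below {f : Ed d → ℝ} {c : ℝ} (hc : 0 < c)
    (hpt : ∀ x, c ≤ f x) :
    eN β (fun x => (f x)⁻¹) ≤ ENNReal.ofReal c⁻¹ + ENNReal.ofReal (c⁻¹ ^ 2) * eT β f := by
  have hfpos : ∀ x, 0 < f x := fun x => lt_of_lt_of_le hc (hpt x)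
  have h1 : ∀ x, (‖(f x)⁻¹‖₊ : ℝ≥0∞) ≤ ENNReal.ofReal c⁻¹ := by
    intro x
    rw [coe_nnnorm_real]
    refine ENNReal.ofReal_le_ofReal ?_
    rw [abs_of_pos (inv_pos.2 (hfpos x))]
    exact inv_anti₀ hc (hpt x)
  have h2 : ∀ x y, x ≠ y → (‖(f x)⁻¹ - (f y)⁻¹‖₊ : ℝ≥0∞) ≤
      (ENNReal.ofReal (c⁻¹ ^ 2) * eT β f) * (‖x - y‖₊ : ℝ≥0∞) ^ β := by
    intro x y hxy
    have hreal : |(f x)⁻¹ - (f y)⁻¹| ≤ c⁻¹ ^ 2 * |f x - f y| := by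
      have hx := hfpos x; have hy := hfpos y
      rw [inv_sub_inv hx.ne' hy.ne', abs_div, abs_mul]
      rw [abs_of_pos hx, abs_of_pos hy, div_le_iff₀ (by positivity)]
      have hcc : c * c ≤ f x * f y := mul_le_mul (hpt x) (hpt y) hc.le hx.le
      have habs : |f y - f x| = |f x - f y| := abs_sub_comm _ _
      rw [habs]
      have hone : (1:ℝ) ≤ c⁻¹ ^ 2 * (f x * f y) := by
        have h0 : c⁻¹ ^ 2 * (c * c) ≤ c⁻¹ ^ 2 * (f x * f y) :=
          mul_le_mul_of_nonneg_left hcc (by positivity)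
        have h1 : c⁻¹ ^ 2 * (c * c) = 1 := by field_simp
        linarith
      calc |f x - f y| = |f x - f y| * 1 := (mul_one _).symm
        _ ≤ |f x - f y| * (c⁻¹ ^ 2 * (f x * f y)) :=
            mul_le_mul_of_nonneg_left hone (abs_nonneg _)
        _ = c⁻¹ ^ 2 * |f x - f y| * (f x * f y) := by ring
    calc (‖(f x)⁻¹ - (f y)⁻¹‖₊ : ℝ≥0∞)
        = ENNReal.ofReal |(f x)⁻¹ - (f y)⁻¹| := coe_nnnorm_real _
      _ ≤ ENNReal.ofReal (c⁻¹ ^ 2 * |f x - f y|) := ENNReal.ofReal_le_ofReal hreal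
      _ = ENNReal.ofReal (c⁻¹ ^ 2) * ENNReal.ofReal |f x - f y| := by
          rw [ENNReal.ofReal_mul (by positivity)]
      _ = ENNReal.ofReal (c⁻¹ ^ 2) * (‖f x - f y‖₊ : ℝ≥0∞) := by rw [coe_nnnorm_real]
      _ ≤ ENNReal.ofReal (c⁻¹ ^ 2) * (eT β f * (‖x - y‖₊ : ℝ≥0∞) ^ β) :=
          mul_le_mul' le_rfl (nnnorm_sub_le_eT f x y)
      _ = (ENNReal.ofReal (c⁻¹ ^ 2) * eT β f) * (‖x - y‖₊ : ℝ≥0∞) ^ β := by ring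
  exact eN_le_of h1 h2


lemma nnnorm_it0 (f : Ed d → ℝ) (x : Ed d) : ‖iteratedFDeriv ℝ 0 f x‖₊ = ‖f x‖₊ := by
  apply NNReal.coe_injective
  simpa using norm_iteratedFDeriv_zero (f := f) (x := x)

lemma nnnorm_it0_sub (f : Ed d → ℝ) (x y : Ed d) :
    ‖iteratedFDeriv ℝ 0 f x - iteratedFDeriv ℝ 0 f y‖₊ = ‖f x - f y‖₊ := by
  rw [iteratedFDeriv_zero_eq_comp]
  simp only [Function.comp_apply]
  rw [← LinearIsometryEquiv.map_sub, LinearIsometryEquiv.nnnorm_map]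

lemma holderNorm_eq_eN (hβ0 : 0 < β) (hβ1 : β < 1) (f : Ed d → ℝ) :
    holderNorm β f = eN β f := by
  have hfl : ⌊β⌋₊ = 0 := Nat.floor_eq_zero.2 hβ1
  have hne : ¬ (β = (⌊β⌋₊ : ℝ)) := by rw [hfl]; push_cast; exact hβ0.ne'
  rw [holderNorm, if_neg hne, hfl]
  have h1 : ∑ j ∈ Finset.range (0 + 1), supDeriv j f = supDeriv 0 f := by simp
  rw [h1, eN]
  congr 1
  · rw [supDeriv, eS]
    exact iSup_congr fun x => by rw [nnnorm_it0]
  · rw [holderSemi, eT]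
    push_cast
    rw [sub_zero]
    exact iSup_congr fun x => iSup_congr fun y => iSup_congr fun h => by
      rw [nnnorm_it0_sub]

lemma supDeriv_le_holderNorm {α : ℝ} {j : ℕ} (f : Ed d → ℝ) (hj : j ≤ ⌊α⌋₊) :
    supDeriv j f ≤ holderNorm α f := by
  refine le_trans ?_ le_self_add
  exact Finset.single_le_sum (f := fun j => supDeriv j f)
    (fun _ _ => zero_le) (Finset.mem_range.2 (Nat.lt_succ_of_le hj))

lemma holderSemi_le_holderNorm {α : ℝ} (f : Ed d → ℝ) (h : α ≠ (⌊α⌋₊ : ℝ)) :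
    holderSemi ⌊α⌋₊ (α - ⌊α⌋₊) f ≤ holderNorm α f := by
  rw [holderNorm, if_neg h]
  exact le_add_self

lemma floor_one_add (hβ0 : 0 < β) (hβ1 : β < 1) : ⌊(1 + β)⌋₊ = 1 := by
  rw [Nat.floor_eq_iff (by linarith)]
  constructor <;> [skip; skip] <;> push_cast <;> linarith

lemma floor_two_add (hβ0 : 0 < β) (hβ1 : β < 1) : ⌊(2 + β)⌋₊ = 2 := by
  rw [Nat.floor_eq_iff (by linarith)]
  constructor <;> push_cast <;> linarith

lemma floor_four_add (hβ0 : 0 < β) (hβ1 : β < 1) : ⌊(4 + β)⌋₊ = 4 := by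
  rw [Nat.floor_eq_iff (by linarith)]
  constructor <;> push_cast <;> linarith

lemma supDeriv_le_holderNorm_two (hβ0 : 0 < β) (hβ1 : β < 1) {j : ℕ} (hj : j ≤ 2)
    (f : Ed d → ℝ) : supDeriv j f ≤ holderNorm (2 + β) f :=
  supDeriv_le_holderNorm f (by rw [floor_two_add hβ0 hβ1]; exact hj)

lemma holderSemi_le_holderNorm_two (hβ0 : 0 < β) (hβ1 : β < 1) (f : Ed d → ℝ) :
    holderSemi 2 β f ≤ holderNorm (2 + β) f := by
  have h := holderSemi_le_holderNorm (α := 2 + β) f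
    (by rw [floor_two_add hβ0 hβ1]; push_cast; linarith)
  rw [floor_two_add hβ0 hβ1] at h
  push_cast at h
  simpa using h

lemma supDeriv_le_holderNorm_one (hβ0 : 0 < β) (hβ1 : β < 1) {j : ℕ} (hj : j ≤ 1)
    (f : Ed d → ℝ) : supDeriv j f ≤ holderNorm (1 + β) f :=
  supDeriv_le_holderNorm f (by rw [floor_one_add hβ0 hβ1]; exact hj)

lemma holderSemi_le_holderNorm_one (hβ0 : 0 < β) (hβ1 : β < 1) (f : Ed d → ℝ) :
    holderSemi 1 β f ≤ holderNorm (1 + β) f := by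
  have h := holderSemi_le_holderNorm (α := 1 + β) f
    (by rw [floor_one_add hβ0 hβ1]; push_cast; linarith)
  rw [floor_one_add hβ0 hβ1] at h
  push_cast at h
  simpa using h

lemma supDeriv_le_holderNorm_four (hβ0 : 0 < β) (hβ1 : β < 1) {j : ℕ} (hj : j ≤ 4)
    (f : Ed d → ℝ) : supDeriv j f ≤ holderNorm (4 + β) f :=
  supDeriv_le_holderNorm f (by rw [floor_four_add hβ0 hβ1]; exact hj)

lemma norm_it_le_of_supDeriv {j : ℕ} {f : Ed d → ℝ} {lam : ℝ} (hlam : 0 ≤ lam)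
    (h : supDeriv j f ≤ ENNReal.ofReal lam) (x : Ed d) :
    ‖iteratedFDeriv ℝ j f x‖ ≤ lam := by
  have h1 : (‖iteratedFDeriv ℝ j f x‖₊ : ℝ≥0∞) ≤ ENNReal.ofReal lam :=
    le_trans (le_iSup (fun x : Ed d => (‖iteratedFDeriv ℝ j f x‖₊ : ℝ≥0∞)) x) h
  rw [← ofReal_norm_eq_coe_nnnorm] at h1
  exact (ENNReal.ofReal_le_ofReal_iff hlam).1 h1


lemma sup2_add_semi_le (hβ0 : 0 < β) (hβ1 : β < 1) (f : Ed d → ℝ) :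
    supDeriv 2 f + holderSemi 2 β f ≤ holderNorm (2 + β) f := by
  have hne : ¬ ((2 + β : ℝ) = (⌊(2 + β : ℝ)⌋₊ : ℝ)) := by
    rw [floor_two_add hβ0 hβ1]; push_cast; intro h; linarith
  rw [holderNorm, if_neg hne, floor_two_add hβ0 hβ1]
  have hβeq : (2 + β - ((2:ℕ) : ℝ)) = β := by push_cast; ring
  rw [hβeq]
  rw [Finset.sum_range_succ, Finset.sum_range_succ, Finset.sum_range_one]
  exact add_le_add (le_add_of_nonneg_left zero_le) le_rfl

lemma sup1_add_semi_le (hβ0 : 0 < β) (hβ1 : β < 1) (f : Ed d → ℝ) :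
    supDeriv 1 f + holderSemi 1 β f ≤ holderNorm (1 + β) f := by
  have hne : ¬ ((1 + β : ℝ) = (⌊(1 + β : ℝ)⌋₊ : ℝ)) := by
    rw [floor_one_add hβ0 hβ1]; push_cast; intro h; linarith
  rw [holderNorm, if_neg hne, floor_one_add hβ0 hβ1]
  have hβeq : (1 + β - ((1:ℕ) : ℝ)) = β := by push_cast; ring
  rw [hβeq]
  rw [Finset.sum_range_succ, Finset.sum_range_one]
  exact add_le_add (le_add_of_nonneg_left zero_le) le_rfl

section Calc

lemma itOne (f : Ed d → ℝ) (x : Ed d) :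
    iteratedFDeriv ℝ 1 f x =
      (continuousMultilinearCurryFin1 ℝ (Ed d) ℝ).symm (fderiv ℝ f x) := by
  ext m
  rw [iteratedFDeriv_one_apply, continuousMultilinearCurryFin1_symm_apply]

lemma norm_fderiv_sub_eq (f : Ed d → ℝ) (x y : Ed d) :
    ‖fderiv ℝ f x - fderiv ℝ f y‖ = ‖iteratedFDeriv ℝ 1 f x - iteratedFDeriv ℝ 1 f y‖ := by
  rw [itOne, itOne, ← LinearIsometryEquiv.map_sub, LinearIsometryEquiv.norm_map]

lemma norm_fderiv_eq (f : Ed d → ℝ) (x : Ed d) :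
    ‖fderiv ℝ f x‖ = ‖iteratedFDeriv ℝ 1 f x‖ := by
  rw [itOne, LinearIsometryEquiv.norm_map]

/-- The entries of `hess f` bounded by the 2nd iterated derivative. -/
lemma hess_entry_le (f : Ed d → ℝ) (x : Ed d) (i j : Fin d) :
    |hess f x i j| ≤ ‖iteratedFDeriv ℝ 2 f x‖ := by
  have h := (iteratedFDeriv ℝ 2 f x).le_opNorm ![EuclideanSpace.single i 1, EuclideanSpace.single j 1]
  rw [hess]
  refine le_trans (le_of_eq (Real.norm_eq_abs _).symm) (le_trans h ?_)
  have : ∏ k : Fin 2, ‖(![EuclideanSpace.single i 1, EuclideanSpace.single j 1] : Fin 2 → Ed d) k‖ = 1 := by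
    rw [Fin.prod_univ_two]
    simp [EuclideanSpace.norm_single]
  rw [this, mul_one]

lemma hess_entry_sub_le (f : Ed d → ℝ) (x y : Ed d) (i j : Fin d) :
    |hess f x i j - hess f y i j| ≤ ‖iteratedFDeriv ℝ 2 f x - iteratedFDeriv ℝ 2 f y‖ := by
  have h := (iteratedFDeriv ℝ 2 f x - iteratedFDeriv ℝ 2 f y).le_opNorm
    ![EuclideanSpace.single i 1, EuclideanSpace.single j 1]
  rw [ContinuousMultilinearMap.sub_apply] at h
  rw [hess, hess]
  refine le_trans (le_of_eq (Real.norm_eq_abs _).symm) (le_trans h ?_)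
  have : ∏ k : Fin 2, ‖(![EuclideanSpace.single i 1, EuclideanSpace.single j 1] : Fin 2 → Ed d) k‖ = 1 := by
    rw [Fin.prod_univ_two]
    simp [EuclideanSpace.norm_single]
  rw [this, mul_one]

/-- eN-bound for entries of the Hessian of `u` in terms of the Hölder norm. -/
lemma eN_hess_entry_le (hβ0 : 0 < β) (hβ1 : β < 1) (u : Ed d → ℝ) (i j : Fin d) :
    eN β (fun x => hess u x i j) ≤ holderNorm (2 + β) u := by
  have h1 : ∀ x, (‖hess u x i j‖₊ : ℝ≥0∞) ≤ supDeriv 2 u := by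
    intro x
    rw [coe_nnnorm_real]
    refine le_trans ?_ (le_iSup (fun x : Ed d => (‖iteratedFDeriv ℝ 2 u x‖₊ : ℝ≥0∞)) x)
    rw [← ofReal_norm_eq_coe_nnnorm]
    exact ENNReal.ofReal_le_ofReal (hess_entry_le u x i j)
  have h2 : ∀ x y, x ≠ y → (‖hess u x i j - hess u y i j‖₊ : ℝ≥0∞) ≤
      holderSemi 2 β u * (‖x - y‖₊ : ℝ≥0∞) ^ β := by
    intro x y hxy
    refine le_trans ?_ (nnnorm_sub_le_holderSemi 2 u x y)
    rw [coe_nnnorm_real, ← ofReal_norm_eq_coe_nnnorm]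
    exact ENNReal.ofReal_le_ofReal (hess_entry_sub_le u x y i j)
  exact le_trans (eN_le_of h1 h2) (sup2_add_semi_le hβ0 hβ1 u)

/-- eN-bound for directional first derivatives. -/
lemma eN_fderiv_entry_le (hβ0 : 0 < β) (hβ1 : β < 1) (u : Ed d → ℝ) (i : Fin d) :
    eN β (fun x => fderiv ℝ u x (EuclideanSpace.single i 1)) ≤ holderNorm (1 + β) u := by
  have hb : ∀ x, |fderiv ℝ u x (EuclideanSpace.single i 1)| ≤ ‖iteratedFDeriv ℝ 1 u x‖ := by
    intro x
    rw [← norm_fderiv_eq]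
    refine le_trans (le_of_eq (Real.norm_eq_abs _).symm) ?_
    refine le_trans ((fderiv ℝ u x).le_opNorm _) ?_
    rw [EuclideanSpace.norm_single, norm_one, mul_one]
  have hbs : ∀ x y, |fderiv ℝ u x (EuclideanSpace.single i 1) - fderiv ℝ u y (EuclideanSpace.single i 1)| ≤
      ‖iteratedFDeriv ℝ 1 u x - iteratedFDeriv ℝ 1 u y‖ := by
    intro x y
    rw [← norm_fderiv_sub_eq]
    refine le_trans (le_of_eq (Real.norm_eq_abs _).symm) ?_
    have h := (fderiv ℝ u x - fderiv ℝ u y).le_opNorm (EuclideanSpace.single i 1)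
    rw [ContinuousLinearMap.sub_apply] at h
    refine le_trans h ?_
    rw [EuclideanSpace.norm_single, norm_one, mul_one]
  have h1 : ∀ x, (‖fderiv ℝ u x (EuclideanSpace.single i 1)‖₊ : ℝ≥0∞) ≤ supDeriv 1 u := by
    intro x
    rw [coe_nnnorm_real]
    refine le_trans ?_ (le_iSup (fun x : Ed d => (‖iteratedFDeriv ℝ 1 u x‖₊ : ℝ≥0∞)) x)
    rw [← ofReal_norm_eq_coe_nnnorm]
    exact ENNReal.ofReal_le_ofReal (hb x)
  have h2 : ∀ x y, x ≠ y → (‖fderiv ℝ u x (EuclideanSpace.single i 1) - fderiv ℝ u y (EuclideanSpace.single i 1)‖₊ : ℝ≥0∞) ≤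
      holderSemi 1 β u * (‖x - y‖₊ : ℝ≥0∞) ^ β := by
    intro x y hxy
    refine le_trans ?_ (nnnorm_sub_le_holderSemi 1 u x y)
    rw [coe_nnnorm_real, ← ofReal_norm_eq_coe_nnnorm]
    exact ENNReal.ofReal_le_ofReal (hbs x y)
  exact le_trans (eN_le_of h1 h2) (sup1_add_semi_le hβ0 hβ1 u)

end Calc


/-- `eN` bound for the determinant of a matrix-valued function. -/
lemma eN_matrix_det (A : Ed d → Matrix (Fin d) (Fin d) ℝ) (K : ℝ≥0∞) (hK : 1 ≤ K)
    (h : ∀ i j, eN β (fun x => A x i j) ≤ K) :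
    eN β (fun x => (A x).det) ≤ (d.factorial : ℝ≥0∞) * K ^ d := by
  classical
  have hdet : ∀ x, (A x).det =
      ∑ σ : Equiv.Perm (Fin d), (Equiv.Perm.sign σ : ℝ) * ∏ i, A x (σ i) i := by
    intro x
    rw [Matrix.det_apply]
    refine Finset.sum_congr rfl fun σ _ => ?_
    rw [Units.smul_def, zsmul_eq_mul]
    try push_cast
    try ring
  have step1 : eN β (fun x => (A x).det) ≤
      ∑ σ : Equiv.Perm (Fin d), eN β (fun x => (Equiv.Perm.sign σ : ℝ) * ∏ i, A x (σ i) i) := by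
    have := eN_sum (β := β) (Finset.univ : Finset (Equiv.Perm (Fin d)))
      (fun σ x => (Equiv.Perm.sign σ : ℝ) * ∏ i, A x (σ i) i)
    refine le_trans (le_of_eq ?_) this
    congr 1
    funext x
    exact hdet x
  refine le_trans step1 ?_
  have hterm : ∀ σ : Equiv.Perm (Fin d),
      eN β (fun x => (Equiv.Perm.sign σ : ℝ) * ∏ i, A x (σ i) i) ≤ K ^ d := by
    intro σ
    have hsign : (‖((Equiv.Perm.sign σ : ℤ) : ℝ)‖₊ : ℝ≥0∞) = 1 := by
      rcases Int.units_eq_one_or (Equiv.Perm.sign σ) with hs | hs <;> rw [hs] <;> simp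
    have hprod : eN β (fun x => ∏ i, A x (σ i) i) ≤ K ^ d := by
      refine le_trans (eN_prod Finset.univ (fun i x => A x (σ i) i)) ?_
      calc ∏ i : Fin d, eN β (fun x => A x (σ i) i) ≤ ∏ _i : Fin d, K :=
            Finset.prod_le_prod' fun i _ => h (σ i) i
        _ = K ^ d := by rw [Finset.prod_const, Finset.card_univ, Fintype.card_fin]
    calc eN β (fun x => (Equiv.Perm.sign σ : ℝ) * ∏ i, A x (σ i) i)
        ≤ eN β (fun _ => ((Equiv.Perm.sign σ : ℤ) : ℝ)) * eN β (fun x => ∏ i, A x (σ i) i) := by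
          exact_mod_cast eN_mul _ _
      _ ≤ 1 * K ^ d := by
          refine mul_le_mul' (le_trans (eN_const_le _) ?_) hprod
          rw [hsign]
      _ = K ^ d := one_mul _
  calc ∑ σ : Equiv.Perm (Fin d), eN β (fun x => (Equiv.Perm.sign σ : ℝ) * ∏ i, A x (σ i) i)
      ≤ ∑ _σ : Equiv.Perm (Fin d), K ^ d := Finset.sum_le_sum fun σ _ => hterm σ
    _ = (d.factorial : ℝ≥0∞) * K ^ d := by
        rw [Finset.sum_const, Finset.card_univ, Fintype.card_perm, Fintype.card_fin, nsmul_eq_mul]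

/-- Determinant lower bound for symmetric matrices with a quadratic-form lower bound. -/
lemma det_lower_bound (M : Matrix (Fin d) (Fin d) ℝ) (hsym : ∀ i j, M i j = M j i)
    {c : ℝ} (hc : 0 ≤ c)
    (hq : ∀ v : Ed d, c * ‖v‖ ^ 2 ≤ ∑ i, ∑ j, v i * M i j * v j) :
    c ^ d ≤ M.det := by
  classical
  have hM : M.IsHermitian := by
    rw [Matrix.IsHermitian]
    ext i j
    rw [Matrix.conjTranspose_apply]
    simp [hsym i j]
  have heig : ∀ i, c ≤ hM.eigenvalues i := by
    intro i
    set v : EuclideanSpace ℝ (Fin d) := hM.eigenvectorBasis i with hv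
    have hnorm : ‖v‖ = 1 := hM.eigenvectorBasis.orthonormal.1 i
    have hmul : M.mulVec (v : Fin d → ℝ) = hM.eigenvalues i • ⇑v := hM.mulVec_eigenvectorBasis i
    have hq' := hq v
    have hQ : ∑ a, ∑ b, v a * M a b * v b = ∑ a, v a * (M.mulVec (v : Fin d → ℝ)) a := by
      refine Finset.sum_congr rfl fun a _ => ?_
      have : (M.mulVec (v : Fin d → ℝ)) a = ∑ b, M a b * v b := rfl
      rw [this, Finset.mul_sum]
      exact Finset.sum_congr rfl fun b _ => by ring
    rw [hQ, hmul] at hq'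
    simp only [Pi.smul_apply, smul_eq_mul] at hq'
    have hvv : ∑ a, v a * v a = 1 := by
      have h1 : ⟪v, v⟫ = ‖v‖ ^ 2 := real_inner_self_eq_norm_sq v
      rw [hnorm, one_pow] at h1
      rw [← h1, PiLp.inner_apply]
      simp [RCLike.inner_apply, conj_trivial, sq]
    have hsum : ∑ a, v a * (hM.eigenvalues i * v a) = hM.eigenvalues i := by
      calc ∑ a, v a * (hM.eigenvalues i * v a)
          = hM.eigenvalues i * ∑ a, v a * v a := by
            rw [Finset.mul_sum]
            exact Finset.sum_congr rfl fun a _ => by ring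
        _ = hM.eigenvalues i := by rw [hvv, mul_one]
    rw [hsum] at hq'
    rw [hnorm, one_pow, mul_one] at hq'
    exact hq'
  calc c ^ d = ∏ _i : Fin d, c := by
        rw [Finset.prod_const, Finset.card_univ, Fintype.card_fin]
    _ ≤ ∏ i, hM.eigenvalues i :=
        Finset.prod_le_prod (fun _ _ => hc) (fun i _ => heig i)
    _ = M.det := by
        have := hM.det_eq_prod_eigenvalues
        rw [this]
        norm_num


section Sq

lemma hasFDerivAt_halfsq (y : Ed d) :
    HasFDerivAt (fun z : Ed d => ‖z‖ ^ 2 / 2) (innerSL ℝ y) y := by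
  have h := (hasStrictFDerivAt_norm_sq y).hasFDerivAt
  have h2 := h.const_smul (2⁻¹ : ℝ)
  have h3 : (fun z : Ed d => ‖z‖ ^ 2 / 2) = (2⁻¹ : ℝ) • fun x : Ed d => ‖x‖ ^ 2 := by
    funext z
    simp only [Pi.smul_apply, smul_eq_mul]
    ring
  rw [h3]
  refine h2.congr_fderiv ?_
  ext w
  simp only [ContinuousLinearMap.smul_apply, two_smul, smul_eq_mul, ContinuousLinearMap.add_apply]
  ring

lemma contDiff_halfsq {n : WithTop ℕ∞} : ContDiff ℝ n (fun z : Ed d => ‖z‖ ^ 2 / 2) :=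
  (contDiff_norm_sq ℝ).div_const 2

lemma fderiv_halfsq (y : Ed d) :
    fderiv ℝ (fun z : Ed d => ‖z‖ ^ 2 / 2) y = innerSL ℝ y :=
  (hasFDerivAt_halfsq y).fderiv

lemma hess_halfsq (x : Ed d) (i j : Fin d) :
    hess (fun z : Ed d => ‖z‖ ^ 2 / 2) x i j = if i = j then 1 else 0 := by
  rw [hess, iteratedFDeriv_two_apply]
  have h1 : fderiv ℝ (fun z : Ed d => ‖z‖ ^ 2 / 2) = fun y => innerSL ℝ y :=
    funext fun y => fderiv_halfsq y
  rw [h1]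
  have h2 : fderiv ℝ (fun y : Ed d => innerSL ℝ y) x = innerSL ℝ (E := Ed d) := by
    exact (innerSL ℝ (E := Ed d)).fderiv
  rw [h2]
  simp only [Matrix.cons_val_zero, Matrix.cons_val_one, Matrix.head_cons]
  rw [innerSL_apply_apply]
  rw [EuclideanSpace.inner_single_left]
  simp [EuclideanSpace.single_apply, eq_comm]

lemma hess_decomp {φ₀ : Ed d → ℝ} (hφ : ContDiff ℝ 4 φ₀) (x : Ed d) (i j : Fin d) :
    hess φ₀ x i j = hess (fun y => φ₀ y - ‖y‖ ^ 2 / 2) x i j + (if i = j then 1 else 0) := by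
  set ψ : Ed d → ℝ := fun y => φ₀ y - ‖y‖ ^ 2 / 2 with hψdef
  have hψ : ContDiff ℝ 2 ψ := (hφ.of_le (by norm_num)).sub contDiff_halfsq
  have hfun : φ₀ = fun y => ψ y + ‖y‖ ^ 2 / 2 := funext fun y => by simp [hψdef]
  have hadd : iteratedFDeriv ℝ 2 φ₀ x =
      iteratedFDeriv ℝ 2 ψ x + iteratedFDeriv ℝ 2 (fun z : Ed d => ‖z‖ ^ 2 / 2) x := by
    conv_lhs => rw [hfun]
    exact fun_iteratedFDeriv_add_apply hψ.contDiffAt contDiff_halfsq.contDiffAt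
  rw [hess, hadd, ContinuousMultilinearMap.add_apply, ← hess_halfsq x i j]
  rfl

lemma hess_symm {φ₀ : Ed d → ℝ} (hφ : ContDiff ℝ 4 φ₀) (x : Ed d) (i j : Fin d) :
    hess φ₀ x i j = hess φ₀ x j i := by
  have h : IsSymmSndFDerivAt ℝ φ₀ x :=
    (hφ.contDiffAt).isSymmSndFDerivAt (by norm_num)
  rw [hess, hess, iteratedFDeriv_two_apply, iteratedFDeriv_two_apply]
  simp only [Matrix.cons_val_zero, Matrix.cons_val_one, Matrix.head_cons]
  exact h _ _

end Sq


section Lip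

lemma lip_of_deriv_bound {k : ℕ} {f : Ed d → ℝ} {lam : ℝ} (hlam : 0 ≤ lam)
    (hdiff : Differentiable ℝ (iteratedFDeriv ℝ k f))
    (hbd : ∀ x, ‖iteratedFDeriv ℝ (k + 1) f x‖ ≤ lam) :
    LipschitzWith lam.toNNReal (iteratedFDeriv ℝ k f) := by
  refine lipschitzWith_of_nnnorm_fderiv_le hdiff fun x => ?_
  have h : ‖fderiv ℝ (iteratedFDeriv ℝ k f) x‖ ≤ lam := by
    rw [norm_fderiv_iteratedFDeriv]; exact hbd x
  rw [← Real.toNNReal_coe (r := ‖fderiv ℝ (iteratedFDeriv ℝ k f) x‖₊)]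
  exact Real.toNNReal_le_toNNReal (by rw [coe_nnnorm]; exact h)

lemma gradient_eq_toDual_symm (f : Ed d → ℝ) (x : Ed d) :
    gradient f x = (InnerProductSpace.toDual ℝ (Ed d)).symm (fderiv ℝ f x) := rfl

lemma gradient_apply (f : Ed d → ℝ) (x : Ed d) (i : Fin d) :
    gradient f x i = fderiv ℝ f x (EuclideanSpace.single i 1) := by
  have h : ⟪gradient f x, EuclideanSpace.single i (1:ℝ)⟫ =
      fderiv ℝ f x (EuclideanSpace.single i 1) := by
    rw [gradient_eq_toDual_symm]
    exact InnerProductSpace.toDual_symm_apply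
  rw [EuclideanSpace.inner_single_right] at h
  simpa using h

lemma gradient_lip {φ₀ : Ed d → ℝ} (hφ : ContDiff ℝ 4 φ₀) {lam : ℝ} (hlam : 1 ≤ lam)
    (hψ2 : ∀ x, ‖iteratedFDeriv ℝ 2 (fun y => φ₀ y - ‖y‖ ^ 2 / 2) x‖ ≤ lam) :
    LipschitzWith (lam + 1).toNNReal (fun x => gradient φ₀ x) := by
  set ψ : Ed d → ℝ := fun y => φ₀ y - ‖y‖ ^ 2 / 2 with hψdef
  have hψC : ContDiff ℝ 4 ψ := hφ.sub contDiff_halfsq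
  have hdiff1 : Differentiable ℝ (iteratedFDeriv ℝ 1 ψ) :=
    hψC.differentiable_iteratedFDeriv (by norm_num)
  have lip1 : LipschitzWith lam.toNNReal (iteratedFDeriv ℝ 1 ψ) :=
    lip_of_deriv_bound (by linarith) hdiff1 hψ2
  have hfun : φ₀ = fun y => ψ y + ‖y‖ ^ 2 / 2 := funext fun y => by simp [hψdef]
  have hfd : ∀ z, fderiv ℝ φ₀ z = fderiv ℝ ψ z + innerSL ℝ z := by
    intro z
    have h1 : HasFDerivAt (fun y => ψ y + ‖y‖ ^ 2 / 2) (fderiv ℝ ψ z + innerSL ℝ z) z :=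
      ((hψC.differentiable (by norm_num) z).hasFDerivAt).add (hasFDerivAt_halfsq z)
    rw [hfun]
    exact h1.fderiv
  refine LipschitzWith.of_dist_le_mul fun x y => ?_
  rw [Real.coe_toNNReal _ (by linarith), dist_eq_norm, dist_eq_norm]
  have heq : gradient φ₀ x - gradient φ₀ y =
      (InnerProductSpace.toDual ℝ (Ed d)).symm (fderiv ℝ φ₀ x - fderiv ℝ φ₀ y) := by
    rw [gradient_eq_toDual_symm, gradient_eq_toDual_symm, map_sub]
  rw [heq, LinearIsometryEquiv.norm_map]
  have hsplit : fderiv ℝ φ₀ x - fderiv ℝ φ₀ y =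
      (fderiv ℝ ψ x - fderiv ℝ ψ y) + (innerSL ℝ x - innerSL ℝ y) := by
    rw [hfd, hfd]; abel
  rw [hsplit]
  refine le_trans (norm_add_le _ _) ?_
  have h1 : ‖fderiv ℝ ψ x - fderiv ℝ ψ y‖ ≤ lam * ‖x - y‖ := by
    rw [norm_fderiv_sub_eq]
    have := lip1.dist_le_mul x y
    rw [dist_eq_norm, dist_eq_norm, Real.coe_toNNReal _ (by linarith)] at this
    exact this
  have h2 : ‖innerSL ℝ x - innerSL ℝ y‖ = ‖x - y‖ := by
    rw [← map_sub, innerSL_apply_norm]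
  rw [h2]
  linarith

end Lip

end MAH

namespace MAH
variable {d : ℕ} {β : ℝ}

lemma eT_le_eN (f : Ed d → ℝ) : eT β f ≤ eN β f := le_add_self

lemma ofReal_coe_toNNReal (x : ℝ) : ((x.toNNReal : ℝ≥0∞)) = ENNReal.ofReal x := rfl

lemma mul_add_mul_le (x y A B : ℝ≥0∞) : x * A + y * B ≤ (x + y) * (A + B) := by
  have h1 : x * A ≤ x * A + x * B := le_self_add
  have h2 : y * B ≤ y * A + y * B := le_add_self
  calc x * A + y * B ≤ (x * A + x * B) + (y * A + y * B) := add_le_add h1 h2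
    _ = (x + y) * (A + B) := by ring

/-- eN bound on entries of the Hessian of `φ₀`. -/
lemma eN_hess_phi_entry (hβ0 : 0 < β) (hβ1 : β < 1) {φ₀ : Ed d → ℝ}
    (hφ : ContDiff ℝ 4 φ₀) {lam : ℝ} (hlam : 1 ≤ lam)
    (h2 : ∀ x, ‖iteratedFDeriv ℝ 2 (fun y => φ₀ y - ‖y‖ ^ 2 / 2) x‖ ≤ lam)
    (h3 : ∀ x, ‖iteratedFDeriv ℝ 3 (fun y => φ₀ y - ‖y‖ ^ 2 / 2) x‖ ≤ lam)
    (i j : Fin d) :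
    eN β (fun x => hess φ₀ x i j) ≤ ENNReal.ofReal (3 * lam + 1) := by
  set ψ : Ed d → ℝ := fun y => φ₀ y - ‖y‖ ^ 2 / 2 with hψdef
  have hψC : ContDiff ℝ 4 ψ := hφ.sub contDiff_halfsq
  have hdiff2 : Differentiable ℝ (iteratedFDeriv ℝ 2 ψ) :=
    hψC.differentiable_iteratedFDeriv (by norm_num)
  have lip2 : LipschitzWith lam.toNNReal (iteratedFDeriv ℝ 2 ψ) :=
    lip_of_deriv_bound (by linarith) hdiff2 h3
  have hb : ∀ x, |hess ψ x i j| ≤ lam := fun x =>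
    le_trans (hess_entry_le ψ x i j) (h2 x)
  have hl : ∀ x y, |hess ψ x i j - hess ψ y i j| ≤ lam * ‖x - y‖ := by
    intro x y
    refine le_trans (hess_entry_sub_le ψ x y i j) ?_
    have := lip2.dist_le_mul x y
    rw [dist_eq_norm, dist_eq_norm, Real.coe_toNNReal _ (by linarith)] at this
    exact this
  have hψbound : eN β (fun x => hess ψ x i j) ≤ ENNReal.ofReal (3 * lam) :=
    eN_le_of_bounded_lipschitz hβ0 hβ1.le (by linarith) hb hl
  have hdec : (fun x => hess φ₀ x i j)
      = fun x => hess ψ x i j + (if i = j then (1:ℝ) else 0) :=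
    funext fun x => hess_decomp hφ x i j
  rw [hdec]
  refine le_trans (eN_add _ _) ?_
  have hconst : eN β (fun _ : Ed d => (if i = j then (1:ℝ) else 0)) ≤ 1 := by
    refine le_trans (eN_const_le _) ?_
    rcases eq_or_ne i j with rfl | hij
    · simp
    · simp [hij]
  calc eN β (fun x => hess ψ x i j) + eN β (fun _ : Ed d => (if i = j then (1:ℝ) else 0))
      ≤ ENNReal.ofReal (3 * lam) + 1 := add_le_add hψbound hconst
    _ = ENNReal.ofReal (3 * lam + 1) := by
        rw [← ENNReal.ofReal_one, ← ENNReal.ofReal_add (by linarith) (by norm_num)]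

lemma frobInner_eq (M N : Matrix (Fin d) (Fin d) ℝ) :
    frobInner M N = ∑ i, ∑ j, M j i * N j i := by
  rw [frobInner, Matrix.trace]
  simp [Matrix.diag, Matrix.mul_apply, Matrix.transpose_apply]

end MAH

open MAH

/-- **Comparison of the linearized Monge–Ampère operators `Ψ̂'_{φ₀}` and `Ψ'_{φ₀}`**. -/
theorem comparison_of_linearized_MA_operators
    (d : ℕ) (hd : 1 ≤ d) (β : ℝ) (hβ0 : 0 < β) (hβ1 : β < 1)
    (lam : ℝ) (hlam : 1 ≤ lam) :
    ∃ C : ℝ, 0 < C ∧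
      ∀ (q qhat : Ed d → ℝ) (φ₀ : Ed d → ℝ) (u : Ed d → ℝ),
        ZdPeriodic q → ZdPeriodic qhat →
        ContDiff ℝ 2 q → ContDiff ℝ 2 qhat →
        holderNorm (2 + β) q ≤ ENNReal.ofReal lam →
        holderNorm (2 + β) qhat ≤ ENNReal.ofReal lam →
        (∀ x, 0 < q x) → (∀ x, 0 < qhat x) →
        ConvexOn ℝ Set.univ φ₀ →
        ZdPeriodic (fun x => φ₀ x - ‖x‖ ^ 2 / 2) →
        ContDiff ℝ 4 φ₀ →
        holderNorm (4 + β) (fun x => φ₀ x - ‖x‖ ^ 2 / 2) ≤ ENNReal.ofReal lam →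
        hessLB φ₀ lam⁻¹ →
        ContDiff ℝ 2 u → ZdPeriodic u → (∫ x in unitCube d, u x) = 0 →
        holderNorm (2 + β) u ≠ ⊤ →
        holderNorm β (fun x =>
            (hess φ₀ x).det *
              ((qhat (gradient φ₀ x) - q (gradient φ₀ x)) *
                  frobInner ((hess φ₀ x)⁻¹) (hess u x) +
                ⟪gradient u x,
                  gradient qhat (gradient φ₀ x) - gradient q (gradient φ₀ x)⟫)) ≤
          ENNReal.ofReal C *
            (holderNorm (2 + β) u * holderNorm β (fun x => qhat x - q x) +
              holderNorm (1 + β) u * holderNorm (1 + β) (fun x => qhat x - q x)) := by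
  classical
  have hlam0 : (0:ℝ) < lam := by linarith
  have h3l : (0:ℝ) < 3 * lam + 1 := by linarith
  have hL0 : (0:ℝ) < lam + 1 := by linarith
  have hd1 : (1:ℝ) ≤ (d:ℝ) := by exact_mod_cast hd
  set Kd : ℝ := d.factorial * (3 * lam + 1) ^ d with hKd_def
  have hKd0 : 0 < Kd := mul_pos (by exact_mod_cast d.factorial_pos) (pow_pos h3l d)
  set c₀ : ℝ := lam⁻¹ ^ d with hc0_def
  have hc00 : 0 < c₀ := pow_pos (by positivity) d
  set Ki : ℝ := c₀⁻¹ + c₀⁻¹ ^ 2 * Kd with hKi_def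
  have hKi0 : 0 ≤ Ki := by
    have h1 : (0:ℝ) ≤ c₀⁻¹ := (inv_nonneg).2 hc00.le
    have h2 : (0:ℝ) ≤ c₀⁻¹ ^ 2 * Kd := mul_nonneg (pow_nonneg h1 2) hKd0.le
    rw [hKi_def]; exact add_nonneg h1 h2
  set KIE : ℝ := Ki * Kd with hKIE_def
  have hKIE0 : 0 ≤ KIE := mul_nonneg hKi0 hKd0.le
  set M1 : ℝ := (lam + 1) * ((d:ℝ) * (d:ℝ) * KIE) with hM1_def
  have hM10 : 0 ≤ M1 :=
    mul_nonneg hL0.le (mul_nonneg (mul_nonneg (by linarith) (by linarith)) hKIE0)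
  set M2 : ℝ := (d:ℝ) * (lam + 1) with hM2_def
  have hM20 : 0 < M2 := mul_pos (by linarith) hL0
  refine ⟨Kd * (M1 + M2), mul_pos hKd0 (by linarith), ?_⟩
  intro q qhat φ₀ u hqper hqhatper hq2 hqhat2 hqn hqhatn hqpos hqhatpos hconv hψper hφC hψn
    hLB hu2 huper huint hufin
  -- abbreviations
  set ψ : Ed d → ℝ := fun x => φ₀ x - ‖x‖ ^ 2 / 2 with hψdef
  set p : Ed d → ℝ := fun x => qhat x - q x with hpdef
  set Φ : Ed d → Ed d := fun x => gradient φ₀ x with hΦdef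
  -- derivative bounds on ψ
  have hψ2 : ∀ x, ‖iteratedFDeriv ℝ 2 ψ x‖ ≤ lam :=
    norm_it_le_of_supDeriv (by linarith)
      (le_trans (supDeriv_le_holderNorm_four hβ0 hβ1 (by norm_num) ψ) hψn)
  have hψ3 : ∀ x, ‖iteratedFDeriv ℝ 3 ψ x‖ ≤ lam :=
    norm_it_le_of_supDeriv (by linarith)
      (le_trans (supDeriv_le_holderNorm_four hβ0 hβ1 (by norm_num) ψ) hψn)
  have hp2 : ContDiff ℝ 2 p := hqhat2.sub hq2
  have hΦlip : LipschitzWith (lam + 1).toNNReal Φ := gradient_lip hφC hlam hψ2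
  have hK1 : (1:ℝ≥0∞) ≤ (((lam + 1).toNNReal : ℝ≥0∞)) := by
    rw [ofReal_coe_toNNReal]; exact ENNReal.one_le_ofReal.2 (by linarith)
  have hone_le : (1:ℝ≥0∞) ≤ ENNReal.ofReal (3 * lam + 1) :=
    ENNReal.one_le_ofReal.2 (by linarith)
  have hhe : ∀ i j : Fin d, eN β (fun x => hess φ₀ x i j) ≤ ENNReal.ofReal (3 * lam + 1) :=
    fun i j => eN_hess_phi_entry hβ0 hβ1 hφC hlam hψ2 hψ3 i j
  have hofKd : (d.factorial : ℝ≥0∞) * (ENNReal.ofReal (3 * lam + 1)) ^ d = ENNReal.ofReal Kd := by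
    rw [hKd_def, ENNReal.ofReal_mul (by positivity), ENNReal.ofReal_pow (by linarith),
      ENNReal.ofReal_natCast]
  -- determinant bound
  have hdet : eN β (fun x => (hess φ₀ x).det) ≤ ENNReal.ofReal Kd := by
    refine le_trans (eN_matrix_det (fun x => hess φ₀ x) (ENNReal.ofReal (3 * lam + 1))
      hone_le hhe) ?_
    rw [hofKd]
  -- determinant lower bound
  have hdlow : ∀ x, c₀ ≤ (hess φ₀ x).det := by
    intro x
    rw [hc0_def]
    exact det_lower_bound (hess φ₀ x) (fun i j => hess_symm hφC x i j)
      (by positivity) (fun v => hLB x v)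
  -- inverse determinant bound
  have hinvdet : eN β (fun x => ((hess φ₀ x).det)⁻¹) ≤ ENNReal.ofReal Ki := by
    refine le_trans (eN_inv_of_bounded_below hc00 hdlow) ?_
    rw [hKi_def, ENNReal.ofReal_add ((inv_nonneg).2 hc00.le)
      (mul_nonneg (pow_nonneg ((inv_nonneg).2 hc00.le) 2) hKd0.le),
      ENNReal.ofReal_mul (pow_nonneg ((inv_nonneg).2 hc00.le) 2)]
    exact add_le_add le_rfl (mul_le_mul' le_rfl (le_trans (eT_le_eN _) hdet))
  -- adjugate entries
  have hadj : ∀ i j : Fin d, eN β (fun x => (hess φ₀ x).adjugate i j) ≤ ENNReal.ofReal Kd := by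
    intro i j
    have hrw : (fun x => (hess φ₀ x).adjugate i j)
        = fun x => ((hess φ₀ x).updateRow j (Pi.single i 1)).det :=
      funext fun x => Matrix.adjugate_apply _ i j
    rw [hrw]
    refine le_trans (eN_matrix_det (fun x => (hess φ₀ x).updateRow j (Pi.single i 1))
      (ENNReal.ofReal (3 * lam + 1)) hone_le ?_) ?_
    · intro a b
      by_cases hab : a = j
      · have hconst : (fun x => ((hess φ₀ x).updateRow j (Pi.single i 1)) a b)
            = fun _ : Ed d => (Pi.single i (1:ℝ) : Fin d → ℝ) b := by
          funext x; rw [Matrix.updateRow_apply, if_pos hab]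
        rw [hconst]
        refine le_trans (eN_const_le _) (le_trans ?_ hone_le)
        have : ‖(Pi.single i (1:ℝ) : Fin d → ℝ) b‖₊ ≤ 1 := by
          rcases eq_or_ne i b with rfl | hib
          · simp
          · simp [Pi.single_apply, hib]
        exact_mod_cast this
      · have hfun : (fun x => ((hess φ₀ x).updateRow j (Pi.single i 1)) a b)
            = fun x => hess φ₀ x a b := by
          funext x; rw [Matrix.updateRow_apply, if_neg hab]
        rw [hfun]; exact hhe a b
    · rw [hofKd]
  -- inverse entries
  have hie : ∀ i j : Fin d, eN β (fun x => ((hess φ₀ x)⁻¹) i j) ≤ ENNReal.ofReal KIE := by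
    intro i j
    have hrw : (fun x => ((hess φ₀ x)⁻¹) i j)
        = fun x => ((hess φ₀ x).det)⁻¹ * (hess φ₀ x).adjugate i j := by
      funext x
      rw [Matrix.inv_def, Matrix.smul_apply, smul_eq_mul, Ring.inverse_eq_inv]
    rw [hrw, hKIE_def, ENNReal.ofReal_mul hKi0]
    exact le_trans (eN_mul _ _) (mul_le_mul' hinvdet (hadj i j))
  -- Frobenius term
  have hfrobT : eN β (fun x => frobInner ((hess φ₀ x)⁻¹) (hess u x))
      ≤ ENNReal.ofReal ((d:ℝ) * (d:ℝ) * KIE) * holderNorm (2 + β) u := by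
    have hrw : (fun x => frobInner ((hess φ₀ x)⁻¹) (hess u x))
        = fun x => ∑ i, ∑ j, ((hess φ₀ x)⁻¹) j i * hess u x j i :=
      funext fun x => frobInner_eq _ _
    rw [hrw]
    refine le_trans (eN_sum Finset.univ _) ?_
    have hinner : ∀ i : Fin d, eN β (fun x => ∑ j, ((hess φ₀ x)⁻¹) j i * hess u x j i)
        ≤ (d : ℝ≥0∞) * (ENNReal.ofReal KIE * holderNorm (2 + β) u) := by
      intro i
      refine le_trans (eN_sum Finset.univ _) ?_
      have hterm : ∀ j : Fin d, eN β (fun x => ((hess φ₀ x)⁻¹) j i * hess u x j i)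
          ≤ ENNReal.ofReal KIE * holderNorm (2 + β) u := fun j =>
        le_trans (eN_mul _ _) (mul_le_mul' (hie j i) (eN_hess_entry_le hβ0 hβ1 u j i))
      refine le_trans (Finset.sum_le_sum fun j _ => hterm j) ?_
      rw [Finset.sum_const, Finset.card_univ, Fintype.card_fin, nsmul_eq_mul]
    refine le_trans (Finset.sum_le_sum fun i _ => hinner i) ?_
    rw [Finset.sum_const, Finset.card_univ, Fintype.card_fin, nsmul_eq_mul]
    have hcast : ENNReal.ofReal ((d:ℝ) * (d:ℝ) * KIE)
        = (d : ℝ≥0∞) * (d : ℝ≥0∞) * ENNReal.ofReal KIE := by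
      rw [ENNReal.ofReal_mul (mul_nonneg (by linarith) (by linarith)),
        ENNReal.ofReal_mul (by linarith), ENNReal.ofReal_natCast]
    rw [hcast]
    exact le_of_eq (by ring)
  -- composition bound
  have hcomp_p : eN β (fun x => p (Φ x)) ≤ ENNReal.ofReal (lam + 1) * eN β p := by
    have h := eN_comp_lipschitz (f := p) (Φ := Φ) hβ0 hβ1.le hK1 hΦlip
    rwa [ofReal_coe_toNNReal] at h
  -- the A term
  have hA : eN β (fun x => (qhat (gradient φ₀ x) - q (gradient φ₀ x)) *
        frobInner ((hess φ₀ x)⁻¹) (hess u x))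
      ≤ ENNReal.ofReal M1 * (eN β p * holderNorm (2 + β) u) := by
    refine le_trans (eN_mul (fun x => p (Φ x))
      (fun x => frobInner ((hess φ₀ x)⁻¹) (hess u x))) ?_
    refine le_trans (mul_le_mul' hcomp_p hfrobT) ?_
    rw [hM1_def, ENNReal.ofReal_mul hL0.le]
    exact le_of_eq (by ring)
  -- gradient composition entries
  have hgrad_comp_entry : ∀ i : Fin d,
      eN β (fun x => fderiv ℝ p (Φ x) (EuclideanSpace.single i 1))
      ≤ ENNReal.ofReal (lam + 1) * holderNorm (1 + β) p := by
    intro i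
    have h := eN_comp_lipschitz (f := fun y => fderiv ℝ p y (EuclideanSpace.single i 1))
      (Φ := Φ) hβ0 hβ1.le hK1 hΦlip
    rw [ofReal_coe_toNNReal] at h
    exact le_trans h (mul_le_mul' le_rfl (eN_fderiv_entry_le hβ0 hβ1 p i))
  -- the B term
  have hBrw : (fun x => (⟪gradient u x,
        gradient qhat (gradient φ₀ x) - gradient q (gradient φ₀ x)⟫ : ℝ))
      = fun x => ∑ i, (fderiv ℝ u x (EuclideanSpace.single i 1)) *
          (fderiv ℝ p (Φ x) (EuclideanSpace.single i 1)) := by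
    funext x
    rw [PiLp.inner_apply]
    refine Finset.sum_congr rfl fun i _ => ?_
    have hsub : (gradient qhat (gradient φ₀ x) - gradient q (gradient φ₀ x)) i
        = gradient qhat (gradient φ₀ x) i - gradient q (gradient φ₀ x) i := rfl
    have hfd : fderiv ℝ p (Φ x) = fderiv ℝ qhat (Φ x) - fderiv ℝ q (Φ x) :=
      fderiv_sub (hqhat2.differentiable (by norm_num) (Φ x))
        (hq2.differentiable (by norm_num) (Φ x))
    simp [RCLike.inner_apply, conj_trivial, hsub, gradient_apply, hfd,
      ContinuousLinearMap.sub_apply]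
    exact mul_comm _ _
  have hB : eN β (fun x => (⟪gradient u x,
        gradient qhat (gradient φ₀ x) - gradient q (gradient φ₀ x)⟫ : ℝ))
      ≤ ENNReal.ofReal M2 * (holderNorm (1 + β) u * holderNorm (1 + β) p) := by
    rw [hBrw]
    refine le_trans (eN_sum Finset.univ _) ?_
    have hterm : ∀ i : Fin d,
        eN β (fun x => (fderiv ℝ u x (EuclideanSpace.single i 1)) *
          (fderiv ℝ p (Φ x) (EuclideanSpace.single i 1)))
        ≤ holderNorm (1 + β) u * (ENNReal.ofReal (lam + 1) * holderNorm (1 + β) p) := fun i =>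
      le_trans (eN_mul _ _) (mul_le_mul' (eN_fderiv_entry_le hβ0 hβ1 u i) (hgrad_comp_entry i))
    refine le_trans (Finset.sum_le_sum fun i _ => hterm i) ?_
    rw [Finset.sum_const, Finset.card_univ, Fintype.card_fin, nsmul_eq_mul, hM2_def,
      ENNReal.ofReal_mul (by linarith), ENNReal.ofReal_natCast]
    exact le_of_eq (by ring)
  -- final assembly
  rw [holderNorm_eq_eN hβ0 hβ1, holderNorm_eq_eN hβ0 hβ1 p]
  refine le_trans (eN_mul (fun x => (hess φ₀ x).det) _) ?_
  refine le_trans (mul_le_mul' hdet (eN_add _ _)) ?_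
  refine le_trans (mul_le_mul' le_rfl (add_le_add hA hB)) ?_
  refine le_trans (mul_le_mul' le_rfl (mul_add_mul_le _ _ _ _)) ?_
  refine le_of_eq ?_
  rw [← ENNReal.ofReal_add hM10 hM20.le, ← mul_assoc, ← ENNReal.ofReal_mul hKd0.le]
  ring

end
end

section
/- Pointwise bound for ball integrals of torus Riesz kernels (Lemma, 'simple_ball_integral'): let d ≥ 2 and t ∈ (1, d). Then there exists a constant C = C(t, d) > 0 such that for every ε ∈ (0, 1/2) and every x ∈ ℝ^d: ∫_{[0,1)^d} 1{‖y‖_𝕋 ≤ ε} · ‖y − x‖_𝕋^{t−d} dy ≤ C · ( max(ε, ‖x‖_𝕋) )^t. -/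
open MeasureTheory Real
open scoped ENNReal NNReal

noncomputable section

/-- The torus quotient norm `‖x‖_𝕋 = inf { ‖x + k‖ : k ∈ ℤ^d }`. -/
def tnorm {d : ℕ} (x : Ed d) : ℝ := ⨅ k : Fin d → ℤ, ‖x + intVec k‖

/-- The half-open unit cube `[0,1)^d`. -/
def cube01 (d : ℕ) : Set (Ed d) := {x | ∀ i, x i ∈ Set.Ico (0 : ℝ) 1}

open Metric

lemma add_intVec_apply {d : ℕ} (z : Ed d) (k : Fin d → ℤ) (i : Fin d) :
    (z + intVec k) i = z i + (k i : ℝ) := by rw [PiLp.add_apply]; rfl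

lemma intVec_zero {d : ℕ} : (intVec (0 : Fin d → ℤ)) = 0 := by
  ext i; simp [intVec]

lemma abs_coord_le_norm {d : ℕ} (x : Ed d) (i : Fin d) : |x i| ≤ ‖x‖ := by
  rw [EuclideanSpace.norm_eq]
  have h1 : |x i| = Real.sqrt (‖x i‖ ^ 2) := by
    rw [Real.sqrt_sq_eq_abs]; simp
  rw [h1]
  apply Real.sqrt_le_sqrt
  exact Finset.single_le_sum (f := fun j => ‖x j‖ ^ 2) (fun j _ => by positivity)
    (Finset.mem_univ i)

lemma tnorm_bdd {d : ℕ} (z : Ed d) :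
    BddBelow (Set.range fun k : Fin d → ℤ => ‖z + intVec k‖) :=
  ⟨0, by rintro _ ⟨k, rfl⟩; exact norm_nonneg _⟩

lemma tnorm_le {d : ℕ} (z : Ed d) (k : Fin d → ℤ) : tnorm z ≤ ‖z + intVec k‖ :=
  ciInf_le (tnorm_bdd z) k

lemma tnorm_nonneg {d : ℕ} (z : Ed d) : 0 ≤ tnorm z :=
  le_ciInf fun _ => norm_nonneg _

lemma tnorm_exists {d : ℕ} (z : Ed d) :
    ∃ k : Fin d → ℤ, tnorm z = ‖z + intVec k‖ ∧ ‖z + intVec k‖ ≤ ‖z‖ := by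
  set m : ℤ := ⌈2 * ‖z‖⌉ with hm
  have hmz : 2 * ‖z‖ ≤ (m : ℝ) := Int.le_ceil _
  have hm0 : (0:ℤ) ≤ m := by
    have : (0:ℝ) ≤ (m:ℝ) := le_trans (by positivity) hmz
    exact_mod_cast this
  set G : Finset (Fin d → ℤ) := Finset.Icc (fun _ => -m) (fun _ => m) with hG
  have h0G : (0 : Fin d → ℤ) ∈ G := by
    simp only [hG, Finset.mem_Icc]
    refine ⟨fun i => by simpa using neg_nonpos.mpr hm0, fun i => by simpa using hm0⟩
  obtain ⟨k₀, hk₀G, hk₀min⟩ := G.exists_min_image (fun k => ‖z + intVec k‖) ⟨0, h0G⟩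
  have hz0 : ‖z + intVec (0 : Fin d → ℤ)‖ = ‖z‖ := by rw [intVec_zero, add_zero]
  have hout : ∀ k : Fin d → ℤ, k ∉ G → ‖z‖ ≤ ‖z + intVec k‖ := by
    intro k hk
    have hex : ∃ i, m < |k i| := by
      by_contra h
      push_neg at h
      apply hk
      simp only [hG, Finset.mem_Icc]
      exact ⟨fun i => (abs_le.mp (h i)).1, fun i => (abs_le.mp (h i)).2⟩
    obtain ⟨i, hi⟩ := hex
    have h1 : (m:ℝ) + 1 ≤ |(k i : ℝ)| := by
      have : m + 1 ≤ |k i| := hi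
      calc (m:ℝ) + 1 = ((m + 1 : ℤ) : ℝ) := by push_cast; ring
        _ ≤ ((|k i| : ℤ) : ℝ) := by exact_mod_cast this
        _ = |(k i : ℝ)| := by push_cast; ring
    have h2 : |z i| ≤ ‖z‖ := abs_coord_le_norm z i
    have h3 : |z i + (k i : ℝ)| ≤ ‖z + intVec k‖ := by
      have := abs_coord_le_norm (z + intVec k) i
      rwa [add_intVec_apply] at this
    have h4 : |(k i:ℝ)| - |z i| ≤ |z i + (k i : ℝ)| := by
      have h := abs_sub_abs_le_abs_sub ((k i:ℝ)) (-(z i))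
      rwa [abs_neg, sub_neg_eq_add, add_comm] at h
    linarith
  refine ⟨k₀, le_antisymm (tnorm_le z k₀) ?_, le_trans (hk₀min 0 h0G) hz0.le⟩
  apply le_ciInf
  intro k
  by_cases hk : k ∈ G
  · exact hk₀min k hk
  · exact le_trans (le_trans (hk₀min 0 h0G) hz0.le) (hout k hk)

lemma tnorm_add_intVec {d : ℕ} (z : Ed d) (mv : Fin d → ℤ) :
    tnorm (z + intVec mv) = tnorm z := by
  have key : ∀ (w : Ed d) (a : Fin d → ℤ), tnorm (w + intVec a) ≤ tnorm w := by
    intro w a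
    obtain ⟨k, hk, -⟩ := tnorm_exists w
    have : w + intVec a + intVec (k - a) = w + intVec k := by
      ext i
      simp only [add_intVec_apply, Pi.sub_apply]
      push_cast; ring
    calc tnorm (w + intVec a) ≤ ‖w + intVec a + intVec (k - a)‖ := tnorm_le _ _
      _ = ‖w + intVec k‖ := by rw [this]
      _ = tnorm w := hk.symm
  refine le_antisymm (key z mv) ?_
  have := key (z + intVec mv) (-mv)
  have h2 : z + intVec mv + intVec (-mv) = z := by
    ext i; simp only [add_intVec_apply, Pi.neg_apply]; push_cast; ring
  rwa [h2] at this

lemma tnorm_continuous {d : ℕ} : Continuous (tnorm (d := d)) := by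
  have key : ∀ a b : Ed d, tnorm a ≤ tnorm b + ‖a - b‖ := by
    intro a b
    obtain ⟨k, hk, -⟩ := tnorm_exists b
    calc tnorm a ≤ ‖a + intVec k‖ := tnorm_le _ _
      _ ≤ ‖b + intVec k‖ + ‖a - b‖ := by
          have : a + intVec k = (b + intVec k) + (a - b) := by abel
          rw [this]; exact norm_add_le _ _
      _ = tnorm b + ‖a - b‖ := by rw [hk]
  have : LipschitzWith 1 (tnorm (d := d)) := by
    apply LipschitzWith.of_dist_le_mul
    intro a b
    rw [Real.dist_eq, NNReal.coe_one, one_mul, dist_eq_norm]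
    rw [abs_sub_le_iff]
    constructor
    · have := key a b; linarith
    · have := key b a; rw [norm_sub_rev] at this; linarith
  exact this.continuous

lemma vol_singleton (d : ℕ) (hd : 1 ≤ d) (p : Ed d) : volume ({p} : Set (Ed d)) = 0 := by
  have h2 := measure_mono (μ := volume) (show ({p} : Set (Ed d)) ⊆ closedBall p 0 by simp)
  rw [Measure.addHaar_closedBall _ _ le_rfl, finrank_euclideanSpace_fin] at h2
  simpa [zero_pow (by omega : d ≠ 0)] using h2

lemma norm_le_d {d : ℕ} (hd : 1 ≤ d) (z : Ed d) (h : ∀ i, |z i| ≤ 1) : ‖z‖ ≤ (d : ℝ) := by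
  rw [EuclideanSpace.norm_eq]
  have hd1 : (1:ℝ) ≤ d := by exact_mod_cast hd
  have h1 : ∑ i, ‖z i‖ ^ 2 ≤ (d:ℝ) := by
    calc ∑ i, ‖z i‖ ^ 2 ≤ ∑ _i : Fin d, (1:ℝ) := by
          apply Finset.sum_le_sum
          intro i _
          have h2 : ‖z i‖ ≤ 1 := by rw [Real.norm_eq_abs]; exact h i
          nlinarith [norm_nonneg (z i)]
      _ = d := by simp
  calc Real.sqrt (∑ i, ‖z i‖ ^ 2) ≤ Real.sqrt ((d:ℝ)^2) :=
        Real.sqrt_le_sqrt (by nlinarith)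
    _ = d := Real.sqrt_sq (by positivity)

lemma kernel_int_bound (d : ℕ) (hd : 1 ≤ d) (t : ℝ) (ht0 : 0 < t) (htd : t < d)
    (p : Ed d) (S : Set (Ed d)) (r : ℝ) (hr : 0 < r)
    (hS : volume S ≤ ENNReal.ofReal (r ^ d) * volume (ball (0 : Ed d) 1)) :
    ∫⁻ y in S, ENNReal.ofReal (‖y - p‖ ^ (t - d)) ≤
      ENNReal.ofReal ((2:ℝ) ^ d) * volume (ball (0 : Ed d) 1) *
        ((1 - ENNReal.ofReal ((1/2:ℝ) ^ t))⁻¹ + 1) * ENNReal.ofReal (r ^ t) := by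
  set ω := volume (ball (0 : Ed d) 1) with hω
  set g : Ed d → ℝ≥0∞ := fun y => ENNReal.ofReal (‖y - p‖ ^ (t - d)) with hg
  set q : ℝ := 1/2 with hq
  set A : ℕ → Set (Ed d) := fun n => {y | r * q ^ (n+1) ≤ ‖y - p‖ ∧ ‖y - p‖ < r * q ^ n} with hA
  have htd' : t - d ≤ 0 := by
    have : (1:ℝ) ≤ d := by exact_mod_cast hd
    linarith
  have hann : ∀ n : ℕ, ∫⁻ y in A n, g y ≤
      ENNReal.ofReal ((2:ℝ)^d * r ^ t) * (ENNReal.ofReal (q ^ t)) ^ (n+1) * ω := by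
    intro n
    have hq0 : (0:ℝ) < q := by norm_num [hq]
    have ha : (0:ℝ) < r * q ^ (n+1) := by positivity
    have step1 : ∫⁻ y in A n, g y ≤ ∫⁻ _ in A n, ENNReal.ofReal ((r * q^(n+1)) ^ (t - d)) := by
      apply setLIntegral_mono measurable_const
      intro y hy
      exact ENNReal.ofReal_le_ofReal (Real.rpow_le_rpow_of_nonpos ha hy.1 htd')
    rw [setLIntegral_const] at step1
    have step2 : volume (A n) ≤ ENNReal.ofReal ((r * q^n) ^ d) * ω := by
      have hsub : A n ⊆ closedBall p (r * q ^ n) := by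
        intro y hy
        rw [mem_closedBall, dist_eq_norm]
        exact hy.2.le
      calc volume (A n) ≤ volume (closedBall p (r * q ^ n)) := measure_mono hsub
        _ = ENNReal.ofReal ((r * q^n) ^ d) * ω := by
            rw [Measure.addHaar_closedBall _ _ (by positivity), finrank_euclideanSpace_fin, hω]
    have key : (r * q^(n+1)) ^ (t - d) * (r * q^n) ^ d = (2:ℝ)^d * r ^ t * (q ^ t) ^ (n+1) := by
      have h2a : r * q^n = 2 * (r * q^(n+1)) := by
        rw [hq]; ring
      rw [h2a, mul_pow]
      have : (r * q^(n+1)) ^ (t - d) * ((2:ℝ)^d * (r * q^(n+1)) ^ d) =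
          (2:ℝ)^d * ((r * q^(n+1)) ^ (t-d) * (r * q^(n+1)) ^ (d:ℝ)) := by
        rw [Real.rpow_natCast]; ring
      rw [this, ← Real.rpow_add ha]
      have he : t - ↑d + ↑d = t := by ring
      rw [he]
      have : (r * q^(n+1)) ^ t = r ^ t * (q^t)^(n+1) := by
        rw [Real.mul_rpow hr.le (by positivity)]
        congr 1
        rw [← Real.rpow_natCast (q^t) (n+1), ← Real.rpow_natCast q (n+1),
          ← Real.rpow_mul hq0.le, ← Real.rpow_mul hq0.le]
        ring_nf
      rw [this]; ring
    calc ∫⁻ y in A n, g y ≤ ENNReal.ofReal ((r * q^(n+1)) ^ (t - d)) * volume (A n) := step1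
      _ ≤ ENNReal.ofReal ((r * q^(n+1)) ^ (t - d)) * (ENNReal.ofReal ((r * q^n) ^ d) * ω) := by
          exact mul_le_mul_right step2 _
      _ = ENNReal.ofReal ((r * q^(n+1)) ^ (t - d) * (r * q^n) ^ d) * ω := by
          rw [ENNReal.ofReal_mul (by positivity)]; ring
      _ = ENNReal.ofReal ((2:ℝ)^d * r ^ t * (q ^ t) ^ (n+1)) * ω := by rw [key]
      _ = ENNReal.ofReal ((2:ℝ)^d * r ^ t) * (ENNReal.ofReal (q ^ t)) ^ (n+1) * ω := by
          rw [ENNReal.ofReal_mul (by positivity), ENNReal.ofReal_pow (by positivity)]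
  have hcover : ball p r \ {p} ⊆ ⋃ n, A n := by
    intro y hy
    obtain ⟨hyb, hyp⟩ := hy
    have hs0 : 0 < ‖y - p‖ := by
      rw [norm_pos_iff, sub_ne_zero]
      exact fun h => hyp (by simp [h])
    have hsr : ‖y - p‖ < r := by rwa [mem_ball, dist_eq_norm] at hyb
    have hP : ∃ n : ℕ, r * q ^ n ≤ ‖y - p‖ := by
      obtain ⟨n, hn⟩ := exists_pow_lt_of_lt_one (x := ‖y - p‖ / r) (y := q)
        (by positivity) (by norm_num [hq])
      exact ⟨n, by rw [mul_comm]; exact (le_div_iff₀ hr).mp hn.le⟩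
    classical
    let N := Nat.find hP
    have hN : r * q ^ N ≤ ‖y - p‖ := Nat.find_spec hP
    have hN0 : N ≠ 0 := by
      intro h
      have := hN
      rw [h] at this
      simp only [pow_zero, mul_one] at this
      linarith
    obtain ⟨n, hn⟩ : ∃ n, N = n + 1 := ⟨N - 1, by omega⟩
    refine Set.mem_iUnion.mpr ⟨n, ?_, ?_⟩
    · rw [← hn]; exact hN
    · have := Nat.find_min hP (m := n) (by omega)
      push_neg at this
      exact this
  have hball : ∫⁻ y in ball p r, g y ≤
      ENNReal.ofReal ((2:ℝ)^d * r ^ t) * (1 - ENNReal.ofReal (q ^ t))⁻¹ * ω := by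
    have h1 : ∫⁻ y in ball p r, g y ≤ ∫⁻ y in (ball p r \ {p}) ∪ {p}, g y := by
      apply lintegral_mono_set
      intro y hy
      by_cases h : y = p
      · right; simp [h]
      · left; exact ⟨hy, h⟩
    have h2 : ∫⁻ y in (ball p r \ {p}) ∪ {p}, g y ≤
        (∫⁻ y in ball p r \ {p}, g y) + ∫⁻ y in ({p} : Set (Ed d)), g y :=
      lintegral_union_le _ _ _
    have h3 : ∫⁻ y in ({p} : Set (Ed d)), g y = 0 :=
      setLIntegral_measure_zero _ _ (vol_singleton d hd p)
    have h4 : ∫⁻ y in ball p r \ {p}, g y ≤ ∑' n, ∫⁻ y in A n, g y :=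
      le_trans (lintegral_mono_set hcover) (lintegral_iUnion_le _ _)
    have h5 : ∑' n, ∫⁻ y in A n, g y ≤
        ∑' n, ENNReal.ofReal ((2:ℝ)^d * r ^ t) * (ENNReal.ofReal (q ^ t)) ^ (n+1) * ω :=
      ENNReal.tsum_le_tsum hann
    have h6 : ∑' n, ENNReal.ofReal ((2:ℝ)^d * r ^ t) * (ENNReal.ofReal (q ^ t)) ^ (n+1) * ω ≤
        ENNReal.ofReal ((2:ℝ)^d * r ^ t) * (1 - ENNReal.ofReal (q ^ t))⁻¹ * ω := by
      rw [ENNReal.tsum_mul_right, ENNReal.tsum_mul_left]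
      apply mul_le_mul_left
      apply mul_le_mul_right
      calc ∑' n, (ENNReal.ofReal (q ^ t)) ^ (n+1) ≤ ∑' n, (ENNReal.ofReal (q ^ t)) ^ n :=
            ENNReal.tsum_le_tsum fun n => pow_le_pow_of_le_one zero_le
              (by
                apply ENNReal.ofReal_le_one.mpr
                exact Real.rpow_le_one (by norm_num [hq]) (by norm_num [hq]) ht0.le)
              (by omega)
        _ = (1 - ENNReal.ofReal (q ^ t))⁻¹ := ENNReal.tsum_geometric _
    calc ∫⁻ y in ball p r, g y ≤ _ := h1
      _ ≤ _ := h2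
      _ = ∫⁻ y in ball p r \ {p}, g y := by rw [h3, add_zero]
      _ ≤ _ := h4
      _ ≤ _ := h5
      _ ≤ _ := h6
  have houter : ∫⁻ y in S \ ball p r, g y ≤ ENNReal.ofReal (r ^ t) * ω := by
    have h1 : ∫⁻ y in S \ ball p r, g y ≤ ∫⁻ _ in S \ ball p r, ENNReal.ofReal (r ^ (t - d)) := by
      apply setLIntegral_mono measurable_const
      intro y hy
      apply ENNReal.ofReal_le_ofReal
      apply Real.rpow_le_rpow_of_nonpos hr _ htd'
      have := hy.2
      rw [mem_ball, dist_eq_norm, not_lt] at this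
      exact this
    rw [setLIntegral_const] at h1
    calc ∫⁻ y in S \ ball p r, g y ≤ ENNReal.ofReal (r ^ (t-d)) * volume (S \ ball p r) := h1
      _ ≤ ENNReal.ofReal (r ^ (t-d)) * volume S := mul_le_mul_right (measure_mono Set.diff_subset) _
      _ ≤ ENNReal.ofReal (r ^ (t-d)) * (ENNReal.ofReal (r ^ d) * ω) := mul_le_mul_right hS _
      _ = ENNReal.ofReal (r ^ (t-d) * r ^ d) * ω := by
          rw [ENNReal.ofReal_mul (by positivity)]; ring
      _ = ENNReal.ofReal (r ^ t) * ω := by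
          congr 1
          rw [← Real.rpow_natCast r d, ← Real.rpow_add hr]
          norm_num
  have hsplit : ∫⁻ y in S, g y ≤ (∫⁻ y in ball p r, g y) + ∫⁻ y in S \ ball p r, g y := by
    calc ∫⁻ y in S, g y ≤ ∫⁻ y in ball p r ∪ (S \ ball p r), g y := by
          apply lintegral_mono_set
          intro y hy
          by_cases h : y ∈ ball p r
          · left; exact h
          · right; exact ⟨hy, h⟩
      _ ≤ _ := lintegral_union_le _ _ _
  calc ∫⁻ y in S, g y ≤ _ := hsplit
    _ ≤ ENNReal.ofReal ((2:ℝ)^d * r ^ t) * (1 - ENNReal.ofReal (q ^ t))⁻¹ * ω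
        + ENNReal.ofReal (r ^ t) * ω := add_le_add hball houter
    _ ≤ ENNReal.ofReal ((2:ℝ)^d) * ω * ((1 - ENNReal.ofReal (q^t))⁻¹ + 1) * ENNReal.ofReal (r ^ t) := by
        rw [ENNReal.ofReal_mul (by positivity)]
        have h1 : (1:ℝ) ≤ (2:ℝ)^d := one_le_pow₀ (by norm_num)
        have : ENNReal.ofReal (r^t) * ω ≤
            ENNReal.ofReal ((2:ℝ)^d) * ENNReal.ofReal (r^t) * ω := by
          calc ENNReal.ofReal (r^t) * ω = 1 * (ENNReal.ofReal (r^t) * ω) := by rw [one_mul]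
            _ ≤ ENNReal.ofReal ((2:ℝ)^d) * (ENNReal.ofReal (r^t) * ω) := by
                apply mul_le_mul_left
                simpa using ENNReal.ofReal_le_ofReal h1
            _ = ENNReal.ofReal ((2:ℝ)^d) * ENNReal.ofReal (r^t) * ω := by ring
        calc ENNReal.ofReal ((2:ℝ)^d) * ENNReal.ofReal (r ^ t) * (1 - ENNReal.ofReal (q ^ t))⁻¹ * ω
              + ENNReal.ofReal (r ^ t) * ω
            ≤ ENNReal.ofReal ((2:ℝ)^d) * ENNReal.ofReal (r ^ t) * (1 - ENNReal.ofReal (q ^ t))⁻¹ * ω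
              + ENNReal.ofReal ((2:ℝ)^d) * ENNReal.ofReal (r^t) * ω := add_le_add_right this _
          _ = ENNReal.ofReal ((2:ℝ)^d) * ω * ((1 - ENNReal.ofReal (q^t))⁻¹ + 1) * ENNReal.ofReal (r ^ t) := by
              ring

/-- **Pointwise bound for ball integrals of torus Riesz kernels** ('simple_ball_integral'). -/
theorem simple_ball_integral
    (d : ℕ) (hd : 2 ≤ d) (t : ℝ) (ht1 : 1 < t) (htd : t < d) :
    ∃ C : ℝ, 0 < C ∧
      ∀ (ε : ℝ), 0 < ε → ε < 1/2 →
        ∀ x : Ed d,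
          (∫⁻ y in cube01 d,
              Set.indicator {y : Ed d | tnorm y ≤ ε}
                (fun y => ENNReal.ofReal (tnorm (y - x) ^ (t - d))) y) ≤
            ENNReal.ofReal (C * max ε (tnorm x) ^ t) := by
  classical
  have hd1 : 1 ≤ d := by omega
  have ht0 : 0 < t := by linarith
  set ω := volume (ball (0 : Ed d) 1) with hω
  set Q : ℝ≥0∞ := ENNReal.ofReal ((1/2 : ℝ) ^ t) with hQ
  set F : Finset (Fin d → ℤ) :=
    Finset.Icc (fun _ => -((d:ℤ)+1)) (fun _ => (d:ℤ)+1) with hF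
  set Cst : ℝ≥0∞ := ENNReal.ofReal ((2:ℝ)^d) * ω * ((1 - Q)⁻¹ + 1) with hCst
  set K : ℝ≥0∞ := (F.card : ℝ≥0∞) * Cst * ENNReal.ofReal ((2:ℝ)^t) with hK
  have hQ1 : Q < 1 :=
    ENNReal.ofReal_lt_one.mpr (Real.rpow_lt_one (by norm_num) (by norm_num) ht0)
  have hKne : K ≠ ⊤ := by
    have hωt : ω ≠ ⊤ := measure_ball_lt_top.ne
    have h1 : (1 - Q)⁻¹ ≠ ⊤ := by
      rw [Ne, ENNReal.inv_eq_top]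
      exact (tsub_pos_of_lt hQ1).ne'
    rw [hK, hCst]
    exact ENNReal.mul_ne_top
      (ENNReal.mul_ne_top (ENNReal.natCast_ne_top _)
        (ENNReal.mul_ne_top (ENNReal.mul_ne_top ENNReal.ofReal_ne_top hωt)
          (ENNReal.add_ne_top.mpr ⟨h1, ENNReal.one_ne_top⟩)))
      ENNReal.ofReal_ne_top
  refine ⟨K.toReal + 1, by positivity, ?_⟩
  intro ε hε0 hε12 x
  -- reduce x to the unit cube
  set m : Fin d → ℤ := fun i => -⌊x i⌋ with hm
  set x' : Ed d := x + intVec m with hx'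
  have hx'cube : ∀ i, x' i ∈ Set.Ico (0:ℝ) 1 := by
    intro i
    have hfl := Int.floor_le (x i)
    have hfu := Int.lt_floor_add_one (x i)
    constructor
    · simp only [hx', PiLp.add_apply]
      show (0:ℝ) ≤ x i + ((-⌊x i⌋ : ℤ) : ℝ)
      push_cast; linarith
    · simp only [hx', PiLp.add_apply]
      show x i + ((-⌊x i⌋ : ℤ) : ℝ) < 1
      push_cast; linarith
  have htx : tnorm x' = tnorm x := tnorm_add_intVec x m
  have hsub : ∀ y : Ed d, tnorm (y - x) = tnorm (y - x') := by
    intro y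
    have h : y - x' = (y - x) + intVec (fun i => -(m i)) := by
      ext i
      simp only [hx', PiLp.sub_apply, PiLp.add_apply]
      show y i - (x i + (m i:ℝ)) = (y i - x i) + ((-(m i) : ℤ):ℝ)
      push_cast; ring
    rw [h, tnorm_add_intVec]
  -- measurability
  have hA : MeasurableSet {y : Ed d | tnorm y ≤ ε} :=
    tnorm_continuous.measurable measurableSet_Iic
  set g : (Fin d → ℤ) → Ed d → ℝ≥0∞ :=
    fun k y => ENNReal.ofReal (‖y - (x' - intVec k)‖ ^ (t - d)) with hgdef
  have hgmeas : ∀ k, Measurable (g k) := by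
    intro k
    apply ENNReal.measurable_ofReal.comp
    exact ((continuous_id.sub continuous_const).norm.measurable).pow measurable_const
  -- pointwise bound
  have hpoint : ∀ y ∈ cube01 d,
      Set.indicator {y : Ed d | tnorm y ≤ ε}
          (fun y => ENNReal.ofReal (tnorm (y - x) ^ (t - d))) y
        ≤ ∑ k ∈ F, Set.indicator {y : Ed d | tnorm y ≤ ε} (g k) y := by
    intro y hy
    by_cases hyA : y ∈ {y : Ed d | tnorm y ≤ ε}
    · rw [Set.indicator_of_mem hyA]
      obtain ⟨k₀, hk₀, hk₀le⟩ := tnorm_exists (y - x')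
      have hcomp : ∀ i, |(y - x') i| ≤ 1 := by
        intro i
        have h1 := hx'cube i
        have h2 := hy i
        show |y i - x' i| ≤ 1
        rw [abs_le]
        exact ⟨by linarith [h1.2, h2.1], by linarith [h1.1, h2.2]⟩
      have hnorm : ‖y - x'‖ ≤ (d:ℝ) := norm_le_d hd1 _ hcomp
      have hk₀F : k₀ ∈ F := by
        rw [hF, Finset.mem_Icc]
        have hbound : ∀ i, |k₀ i| ≤ (d:ℤ) + 1 := by
          intro i
          have h1 : |(y - x') i + (k₀ i : ℝ)| ≤ ‖(y - x') + intVec k₀‖ := by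
            have := abs_coord_le_norm ((y - x') + intVec k₀) i
            rwa [add_intVec_apply] at this
          have h2 : |(k₀ i : ℝ)| - |(y - x') i| ≤ |(y - x') i + (k₀ i:ℝ)| := by
            have h := abs_sub_abs_le_abs_sub ((k₀ i:ℝ)) (-((y - x') i))
            rwa [abs_neg, sub_neg_eq_add, add_comm] at h
          have h3 : |(k₀ i : ℝ)| ≤ (d:ℝ) + 1 := by
            have h4 := hcomp i
            have h5 : ‖(y - x') + intVec k₀‖ ≤ (d:ℝ) := le_trans hk₀le hnorm
            linarith
          have h6 : ((|k₀ i| : ℤ) : ℝ) ≤ (((d:ℤ) + 1 : ℤ) : ℝ) := by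
            push_cast
            push_cast at h3
            exact h3
          exact_mod_cast h6
        exact ⟨fun i => (abs_le.mp (hbound i)).1, fun i => (abs_le.mp (hbound i)).2⟩
      have heq : tnorm (y - x) = ‖y - (x' - intVec k₀)‖ := by
        rw [hsub y, hk₀, sub_add]
      rw [heq]
      calc ENNReal.ofReal (‖y - (x' - intVec k₀)‖ ^ (t - (d:ℝ)))
          ≤ ∑ k ∈ F, g k y :=
            Finset.single_le_sum (f := fun k => g k y) (fun k _ => zero_le) hk₀F
        _ = ∑ k ∈ F, Set.indicator {y : Ed d | tnorm y ≤ ε} (g k) y := by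
            refine Finset.sum_congr rfl fun k _ => ?_
            rw [Set.indicator_of_mem hyA]
    · rw [Set.indicator_of_notMem hyA]
      exact zero_le
  -- integral chain
  set S : Set (Ed d) := {y : Ed d | tnorm y ≤ ε} ∩ cube01 d with hSdef
  have step1 : (∫⁻ y in cube01 d,
        Set.indicator {y : Ed d | tnorm y ≤ ε}
          (fun y => ENNReal.ofReal (tnorm (y - x) ^ (t - d))) y)
      ≤ ∫⁻ y in cube01 d, ∑ k ∈ F, Set.indicator {y : Ed d | tnorm y ≤ ε} (g k) y :=
    setLIntegral_mono (F.measurable_sum fun k _ => ((hgmeas k).indicator hA)) hpoint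
  have step2 : (∫⁻ y in cube01 d, ∑ k ∈ F, Set.indicator {y : Ed d | tnorm y ≤ ε} (g k) y)
      = ∑ k ∈ F, ∫⁻ y in cube01 d, Set.indicator {y : Ed d | tnorm y ≤ ε} (g k) y :=
    lintegral_finset_sum F fun k _ => ((hgmeas k).indicator hA)
  have step3 : ∀ k, (∫⁻ y in cube01 d, Set.indicator {y : Ed d | tnorm y ≤ ε} (g k) y)
      = ∫⁻ y in S, g k y := by
    intro k
    rw [lintegral_indicator hA, Measure.restrict_restrict hA]
  -- volume of S
  have hvolS : volume S ≤ ENNReal.ofReal ((2*ε) ^ d) * ω := by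
    set corners : Finset (Fin d → ℤ) := Finset.Icc 0 1 with hcorn
    have hcover : S ⊆ ⋃ c ∈ corners, closedBall (intVec c) ε := by
      intro y hy
      obtain ⟨hyA', hycube⟩ := hy
      obtain ⟨k, hk, -⟩ := tnorm_exists y
      have hknorm : ‖y + intVec k‖ ≤ ε := by
        rw [← hk]; exact hyA'
      have hki : ∀ i, k i = 0 ∨ k i = -1 := by
        intro i
        have h1 : |y i + (k i : ℝ)| ≤ ε := by
          have := abs_coord_le_norm (y + intVec k) i
          rw [add_intVec_apply] at this
          linarith
        have h2 := hycube i
        have h3 : (k i : ℝ) < 1 := by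
          have := (abs_le.mp h1).2
          linarith [h2.1]
        have h4 : (-2 : ℝ) < (k i : ℝ) := by
          have := (abs_le.mp h1).1
          linarith [h2.2]
        have h5 : k i < 1 := by exact_mod_cast h3
        have h6 : (-2 : ℤ) < k i := by exact_mod_cast h4
        omega
      have hmem : -k ∈ corners := by
        rw [hcorn, Finset.mem_Icc]
        constructor
        · intro i
          have := hki i
          simp only [Pi.zero_apply, Pi.neg_apply]
          omega
        · intro i
          have := hki i
          simp only [Pi.one_apply, Pi.neg_apply]
          omega
      apply Set.mem_biUnion hmem
      rw [mem_closedBall, dist_eq_norm]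
      have : y - intVec (-k) = y + intVec k := by
        ext i
        rw [PiLp.sub_apply, PiLp.add_apply]
        show y i - ((-(k i) : ℤ) : ℝ) = y i + (k i : ℝ)
        push_cast; ring
      rw [this]
      exact hknorm
    have hcard : corners.card = 2 ^ d := by
      simp [hcorn, Pi.card_Icc, Int.card_Icc]
    calc volume S ≤ volume (⋃ c ∈ corners, closedBall (intVec c) ε) := measure_mono hcover
      _ ≤ ∑ c ∈ corners, volume (closedBall (intVec c) ε) := measure_biUnion_finset_le _ _
      _ = ∑ _c ∈ corners, ENNReal.ofReal (ε ^ d) * ω := by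
          refine Finset.sum_congr rfl fun c _ => ?_
          rw [Measure.addHaar_closedBall _ _ hε0.le, finrank_euclideanSpace_fin, hω]
      _ = (corners.card : ℝ≥0∞) * (ENNReal.ofReal (ε^d) * ω) := by
          rw [Finset.sum_const, nsmul_eq_mul]
      _ = ENNReal.ofReal ((2*ε)^d) * ω := by
          rw [hcard, mul_pow, ENNReal.ofReal_mul (by positivity), ← mul_assoc]
          congr 1
          congr 1
          rw [show ((2:ℝ)^d) = ((2^d : ℕ) : ℝ) by push_cast; ring, ENNReal.ofReal_natCast]
  -- apply kernel bound for each k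
  have step4 : ∀ k, (∫⁻ y in S, g k y) ≤ Cst * ENNReal.ofReal ((2*ε) ^ t) := by
    intro k
    have := kernel_int_bound d hd1 t ht0 htd (x' - intVec k) S (2*ε) (by linarith) hvolS
    rw [hCst, hQ, hω]
    exact this
  -- combine
  have main : (∫⁻ y in cube01 d,
        Set.indicator {y : Ed d | tnorm y ≤ ε}
          (fun y => ENNReal.ofReal (tnorm (y - x) ^ (t - d))) y)
      ≤ (F.card : ℝ≥0∞) * (Cst * ENNReal.ofReal ((2*ε) ^ t)) := by
    calc _ ≤ _ := step1
      _ = _ := step2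
      _ = ∑ k ∈ F, ∫⁻ y in S, g k y := Finset.sum_congr rfl fun k _ => step3 k
      _ ≤ ∑ _k ∈ F, Cst * ENNReal.ofReal ((2*ε) ^ t) :=
          Finset.sum_le_sum fun k _ => step4 k
      _ = (F.card : ℝ≥0∞) * (Cst * ENNReal.ofReal ((2*ε) ^ t)) := by
          rw [Finset.sum_const, nsmul_eq_mul]
  -- convert to the final form
  have h2e : (2*ε)^t = 2^t * ε^t := Real.mul_rpow (by norm_num) hε0.le
  have hmax : ε ^ t ≤ max ε (tnorm x) ^ t :=
    Real.rpow_le_rpow hε0.le (le_max_left _ _) ht0.le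
  have hKC : K ≤ ENNReal.ofReal (K.toReal + 1) := by
    calc K = ENNReal.ofReal K.toReal := (ENNReal.ofReal_toReal hKne).symm
      _ ≤ ENNReal.ofReal (K.toReal + 1) := ENNReal.ofReal_le_ofReal (by linarith)
  calc (∫⁻ y in cube01 d,
        Set.indicator {y : Ed d | tnorm y ≤ ε}
          (fun y => ENNReal.ofReal (tnorm (y - x) ^ (t - d))) y)
      ≤ (F.card : ℝ≥0∞) * (Cst * ENNReal.ofReal ((2*ε) ^ t)) := main
    _ = K * ENNReal.ofReal (ε ^ t) := by
        rw [h2e, ENNReal.ofReal_mul (by positivity), hK]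
        ring
    _ ≤ ENNReal.ofReal (K.toReal + 1) * ENNReal.ofReal (max ε (tnorm x) ^ t) :=
        mul_le_mul' hKC (ENNReal.ofReal_le_ofReal hmax)
    _ = ENNReal.ofReal ((K.toReal + 1) * max ε (tnorm x) ^ t) :=
        (ENNReal.ofReal_mul (by positivity)).symm

end
end
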